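/- arXiv:1007.4356 — 9 statements merged into one kernel-verified Lean document; each statement's English description precedes it below -/
import Mathlib

section
/- Let N be an admissible algebra (finite-dimensional nilpotent commutative associative ℂ-algebra with one-dimensional annihilator), N⁰ = ℂ ⊕ N its unital extension, and π : N⁰ → Ann(N) a linear projection with range Ann(N), π(N) ⊆ Ann(N), π restricted to Ann(N) the identity, and π(1) = 0. Then the Ann(N)-valued symmetric bilinear form b_π(u,v) := π(uv) on N⁰ is non-degenerate. -/
open Finset

/-- Annihilator `Ann(N) = {u ∈ N : uN = 0}` of a non-unital commutative ℂ-algebra. -/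
def annN (N : Type*) [NonUnitalCommRing N] [Module ℂ N] [IsScalarTower ℂ N N] :
    Submodule ℂ N where
  carrier := {u | ∀ v : N, u * v = 0}
  add_mem' := fun ha hb v => by rw [add_mul, ha v, hb v, add_zero]
  zero_mem' := fun v => zero_mul v
  smul_mem' := fun c a ha v => by rw [smul_mul_assoc, ha v, smul_zero]

/-- The descending chain of ideals: `npow N j` is `N^j` for `j ≥ 1`
(`N^1 = N`, `N^{j+1} = span(N·N^j)`; `npow N 0 := ⊤` by convention). -/
def npow (N : Type*) [NonUnitalCommRing N] [Module ℂ N] : ℕ → Submodule ℂ N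
  | 0 => ⊤
  | 1 => ⊤
  | (j+2) => Submodule.span ℂ {x : N | ∃ u : N, ∃ v ∈ npow N (j+1), x = u * v}

/-- Powers `u^m` of an element in a non-unital commutative ring
(`upow u 0 := 0` by convention; only `m ≥ 1` is used). -/
def upow {N : Type*} [NonUnitalCommRing N] (u : N) : ℕ → N
  | 0 => 0
  | 1 => u
  | (m+2) => u * upow u (m+1)

lemma mem_annN {N : Type*} [NonUnitalCommRing N] [Module ℂ N] [IsScalarTower ℂ N N]
    {x : N} : x ∈ annN N ↔ ∀ v : N, x * v = 0 := Iff.rfl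

lemma mul_mem_npow {N : Type*} [NonUnitalCommRing N] [Module ℂ N]
    (k : ℕ) (y x : N) (hx : x ∈ npow N k) : y * x ∈ npow N (k + 1) := by
  match k with
  | 0 => exact Submodule.mem_top
  | (k+1) =>
    show y * x ∈ Submodule.span ℂ _
    exact Submodule.subset_span ⟨y, x, hx, rfl⟩

lemma key {N : Type*} [NonUnitalCommRing N] [Module ℂ N] [IsScalarTower ℂ N N]
    (ν : ℕ) (hnil : npow N (ν + 1) = ⊥) :
    ∀ d x, x ∈ npow N (ν + 1 - d) → x ≠ 0 →
      ∃ z : N, z ≠ 0 ∧ z ∈ annN N ∧ (z = x ∨ ∃ y : N, z = x * y) := by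
  intro d
  induction d with
  | zero =>
    intro x hx hx0
    simp only [Nat.sub_zero, hnil, Submodule.mem_bot] at hx
    exact absurd hx hx0
  | succ d ih =>
    intro x hx hx0
    by_cases hA : x ∈ annN N
    · exact ⟨x, hx0, hA, Or.inl rfl⟩
    · rw [mem_annN] at hA
      push_neg at hA
      obtain ⟨y, hy⟩ := hA
      have hmem : x * y ∈ npow N (ν + 1 - d) := by
        rcases le_or_gt d ν with h | h
        · have : ν + 1 - d = (ν + 1 - (d+1)) + 1 := by omega
          rw [this, mul_comm]
          exact mul_mem_npow _ y x hx
        · have : ν + 1 - d = 0 := by omega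
          rw [this]; exact Submodule.mem_top
      obtain ⟨z, hz0, hzA, hz⟩ := ih (x * y) hmem hy
      refine ⟨z, hz0, hzA, Or.inr ?_⟩
      rcases hz with rfl | ⟨y', rfl⟩
      · exact ⟨y, rfl⟩
      · exact ⟨y * y', mul_assoc x y y'⟩

/-- For an admissible algebra `N` with unital extension `N⁰ = ℂ ⊕ N`
(`Unitization ℂ N`) and an admissible projection `π : N⁰ → Ann(N)` (range in `Ann(N)`,
identity on `Ann(N)`, `π(1) = 0`), the `Ann(N)`-valued symmetric bilinear form
`b_π(u,v) = π(uv)` on `N⁰` is non-degenerate. -/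
theorem stmt2 (N : Type*) [NonUnitalCommRing N] [Module ℂ N] [SMulCommClass ℂ N N]
    [IsScalarTower ℂ N N] [FiniteDimensional ℂ N]
    (ν : ℕ) (hnil : npow N (ν + 1) = ⊥) (hann : Module.finrank ℂ (annN N) = 1)
    (π : Unitization ℂ N →ₗ[ℂ] N)
    (hrange : ∀ u : Unitization ℂ N, π u ∈ annN N)
    (hid : ∀ u ∈ annN N, π (Unitization.inr u : Unitization ℂ N) = u)
    (hone : π 1 = 0) :
    ∀ u : Unitization ℂ N, (∀ v : Unitization ℂ N, π (u * v) = 0) → u = 0 := by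
  intro u hu
  have hne : annN N ≠ ⊥ := by
    intro h
    rw [h, finrank_bot] at hann
    exact one_ne_zero hann.symm
  obtain ⟨e, heA, he0⟩ := Submodule.exists_mem_ne_zero_of_ne_bot hne
  have h1 : π u = 0 := by simpa using hu 1
  -- scalar part vanishes
  have hse : u.snd * e = 0 := by rw [mul_comm]; exact heA u.snd
  have hmul : u * Unitization.inr e = Unitization.inr (u.fst • e) := by
    refine Unitization.ext ?_ ?_ <;>
      simp [Unitization.snd_mul, Unitization.fst_mul, hse]
  have hfst : u.fst = 0 := by
    have h2 : u.fst • e = 0 := by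
      have := hu (Unitization.inr e)
      rw [hmul, hid _ (Submodule.smul_mem _ _ heA)] at this
      exact this
    rcases smul_eq_zero.mp h2 with h | h
    · exact h
    · exact absurd h he0
  have hu' : u = Unitization.inr u.snd := by
    have := Unitization.inl_fst_add_inr_snd_eq u
    rw [hfst] at this
    simpa using this.symm
  by_contra h0
  have hsnd : u.snd ≠ 0 := by
    intro h
    exact h0 (by rw [hu', h, Unitization.inr_zero])
  have htop : npow N (ν + 1 - (ν + 1)) = ⊤ := by rw [Nat.sub_self]; rfl
  obtain ⟨z, hz0, hzA, hz⟩ := key ν hnil (ν + 1) u.snd (htop ▸ Submodule.mem_top) hsnd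
  rcases hz with rfl | ⟨y, rfl⟩
  · rw [hu', hid _ hzA] at h1
    exact hz0 h1
  · have := hu (Unitization.inr y)
    rw [hu', ← Unitization.inr_mul, hid _ hzA] at this
    exact hz0 this
end

section
/- Let N be an admissible algebra and π, π̃ two admissible projections N → Ann(N). Then there exists a ∈ N such that S_{π̃} = S_π + a, where S_π := {u ∈ N : π(exp₁(2u)) = 0} and exp₁(v) := Σ_{m≥1} v^m/m!. -/
open Finset

set_option linter.unusedSectionVars false

section lemmas
variable {N : Type*} [NonUnitalCommRing N] [Module ℂ N]

lemma mul_mem_npow_s4 (u v : N) (j : ℕ) (hv : v ∈ npow N j) : u * v ∈ npow N (j+1) := by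
  match j with
  | 0 => exact Submodule.mem_top
  | (j+1) => exact Submodule.subset_span ⟨u, v, hv, rfl⟩

lemma npow_succ_le (j : ℕ) : npow N (j+1) ≤ npow N j := by
  induction j with
  | zero => exact le_top
  | succ j ih =>
    match j with
    | 0 => exact le_top
    | (j+1) =>
      rw [npow]
      refine Submodule.span_le.mpr ?_
      rintro x ⟨u, v, hv, rfl⟩
      exact mul_mem_npow_s4 u v _ (ih hv)

lemma npow_le {i j : ℕ} (h : i ≤ j) : npow N j ≤ npow N i := by
  induction h with
  | refl => exact le_rfl
  | step h ih => exact le_trans (npow_succ_le _) ih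

lemma upow_mem_npow (u : N) (m : ℕ) : upow u (m+1) ∈ npow N (m+1) := by
  induction m with
  | zero => exact Submodule.mem_top
  | succ m ih => exact mul_mem_npow_s4 u _ _ ih

lemma upow_zero' (m : ℕ) : upow (0 : N) m = 0 := by
  match m with
  | 0 => rfl
  | 1 => rfl
  | (m+2) => show (0 : N) * _ = 0; rw [zero_mul]

variable (ν : ℕ)

lemma upow_eq_zero (hnil : npow N (ν + 1) = ⊥) {m : ℕ} (hm : ν + 1 ≤ m) (u : N) : upow u m = 0 := by
  obtain ⟨m, rfl⟩ : ∃ k, m = k + 1 := ⟨m - 1, by omega⟩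
  have := npow_le hm (upow_mem_npow u m)
  rw [hnil] at this
  simpa using this

lemma mul_npow_mem (u : N) (i : ℕ) {w : N} {j : ℕ} (hw : w ∈ npow N j) :
    upow u (i+1) * w ∈ npow N (j + i + 1) := by
  induction i with
  | zero => exact mul_mem_npow_s4 u w j hw
  | succ i ih =>
    show (u * upow u (i+1)) * w ∈ _
    rw [mul_assoc]
    exact mul_mem_npow_s4 u _ _ ih

lemma upow_mul_upow_eq_zero (hnil : npow N (ν + 1) = ⊥) {i j : ℕ} (hi : 1 ≤ i) (hj : 1 ≤ j) (h : ν + 1 ≤ i + j) (x y : N) :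
    upow x i * upow y j = 0 := by
  obtain ⟨i, rfl⟩ : ∃ k, i = k + 1 := ⟨i - 1, by omega⟩
  obtain ⟨j, rfl⟩ : ∃ k, j = k + 1 := ⟨j - 1, by omega⟩
  have h1 := mul_npow_mem x i (upow_mem_npow y j)
  have := npow_le (show ν + 1 ≤ (j+1) + i + 1 by omega) h1
  rw [hnil] at this
  simpa using this

end lemmas

section part2
variable {N : Type*} [NonUnitalCommRing N] [Module ℂ N] [SMulCommClass ℂ N N]
    [IsScalarTower ℂ N N]

noncomputable def Fexp (ν : ℕ) (u : N) : N :=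
  ∑ m ∈ Finset.Icc 1 ν, ((Nat.factorial m : ℂ))⁻¹ • upow u m

lemma inr_upow (u : N) (m : ℕ) :
    ((upow u (m+1) : N) : Unitization ℂ N) = (u : Unitization ℂ N)^(m+1) := by
  induction m with
  | zero => simp [upow]
  | succ m ih =>
    show ((u * upow u (m+1) : N) : Unitization ℂ N) = _
    rw [Unitization.inr_mul, ih, pow_succ]
    ring

lemma sum_Icc_one {M : Type*} [AddCommMonoid M] (h : ℕ → M) (n : ℕ) :
    ∑ m ∈ Finset.Icc 1 n, h m = ∑ i ∈ Finset.range n, h (i+1) := by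
  induction n with
  | zero => simp
  | succ n ih => rw [Finset.sum_Icc_succ_top (by omega), ih, Finset.sum_range_succ]

lemma inr_Fexp (ν : ℕ) (u : N) :
    ((Fexp ν u : N) : Unitization ℂ N)
      = ∑ m ∈ Finset.range (ν+1), ((Nat.factorial m : ℂ))⁻¹ • (u : Unitization ℂ N)^m - 1 := by
  rw [Fexp, sum_Icc_one, Finset.sum_range_succ']
  have h1 : ((∑ i ∈ Finset.range ν, ((Nat.factorial (i+1) : ℂ))⁻¹ • upow u (i+1) : N) : Unitization ℂ N)
      = ∑ i ∈ Finset.range ν, ((Nat.factorial (i+1) : ℂ))⁻¹ • ((upow u (i+1) : N) : Unitization ℂ N) := by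
    exact map_sum (Unitization.inrHom ℂ ℂ N) _ _ |>.trans (by
      refine Finset.sum_congr rfl fun i _ => ?_
      exact map_smul (Unitization.inrHom ℂ ℂ N) _ _)
  rw [h1]
  simp [inr_upow, Nat.factorial]
end part2

section part3
variable {N : Type*} [NonUnitalCommRing N] [Module ℂ N] [SMulCommClass ℂ N N]
    [IsScalarTower ℂ N N]

lemma fact_inv_choose (m i : ℕ) (h : i ≤ m) :
    ((Nat.factorial m : ℂ))⁻¹ * (Nat.choose m i : ℂ)
      = ((Nat.factorial i : ℂ))⁻¹ * ((Nat.factorial (m-i) : ℂ))⁻¹ := by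
  have h0 := Nat.choose_mul_factorial_mul_factorial h
  have h1 : (Nat.choose m i : ℂ) * (Nat.factorial i : ℂ) * (Nat.factorial (m-i) : ℂ)
      = (Nat.factorial m : ℂ) := by exact_mod_cast congrArg (Nat.cast (R := ℂ)) h0
  have f1 : (Nat.factorial m : ℂ) ≠ 0 := Nat.cast_ne_zero.mpr (Nat.factorial_ne_zero m)
  have f2 : (Nat.factorial i : ℂ) ≠ 0 := Nat.cast_ne_zero.mpr (Nat.factorial_ne_zero i)
  have f3 : (Nat.factorial (m-i) : ℂ) ≠ 0 := Nat.cast_ne_zero.mpr (Nat.factorial_ne_zero (m-i))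
  field_simp
  linear_combination h1

lemma Gmul (ν : ℕ) (hnil : npow N (ν + 1) = ⊥) (x y : N) :
    (∑ m ∈ Finset.range (ν+1), ((Nat.factorial m : ℂ))⁻¹ • (x : Unitization ℂ N)^m)
      * (∑ m ∈ Finset.range (ν+1), ((Nat.factorial m : ℂ))⁻¹ • (y : Unitization ℂ N)^m)
    = ∑ m ∈ Finset.range (ν+1),
        ((Nat.factorial m : ℂ))⁻¹ • ((x : Unitization ℂ N) + (y : Unitization ℂ N))^m := by
  set X : Unitization ℂ N := (x : Unitization ℂ N) with hX
  set Y : Unitization ℂ N := (y : Unitization ℂ N) with hY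
  set g : ℕ × ℕ → Unitization ℂ N :=
    fun p => (((Nat.factorial p.1 : ℂ))⁻¹ * ((Nat.factorial p.2 : ℂ))⁻¹) • (X^p.1 * Y^p.2)
    with hg
  have hzero : ∀ i j : ℕ, ν + 1 ≤ i + j → i ≤ ν → j ≤ ν → X^i * Y^j = 0 := by
    intro i j hij hi hj
    have hi1 : 1 ≤ i := by omega
    have hj1 : 1 ≤ j := by omega
    obtain ⟨i, rfl⟩ : ∃ k, i = k + 1 := ⟨i - 1, by omega⟩
    obtain ⟨j, rfl⟩ : ∃ k, j = k + 1 := ⟨j - 1, by omega⟩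
    rw [hX, hY, ← inr_upow, ← inr_upow, ← Unitization.inr_mul,
      upow_mul_upow_eq_zero ν hnil (by omega) (by omega) hij]
    exact Unitization.inr_zero ℂ
  have lhs_eq : (∑ m ∈ Finset.range (ν+1), ((Nat.factorial m : ℂ))⁻¹ • X^m)
      * (∑ m ∈ Finset.range (ν+1), ((Nat.factorial m : ℂ))⁻¹ • Y^m)
      = ∑ p ∈ Finset.range (ν+1) ×ˢ Finset.range (ν+1), g p := by
    rw [Finset.sum_mul_sum, ← Finset.sum_product']
    refine Finset.sum_congr rfl fun p _ => ?_
    rw [hg, smul_mul_smul_comm]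
  have rhs_eq : ∑ m ∈ Finset.range (ν+1),
        ((Nat.factorial m : ℂ))⁻¹ • (X + Y)^m
      = ∑ q ∈ (Finset.range (ν+1)).sigma (fun m => Finset.range (m+1)),
          g (q.2, q.1 - q.2) := by
    rw [Finset.sum_sigma]
    refine Finset.sum_congr rfl fun m hm => ?_
    rw [add_pow, Finset.smul_sum]
    refine Finset.sum_congr rfl fun i hi => ?_
    have hi' : i ≤ m := by simpa using Nat.lt_succ_iff.mp (Finset.mem_range.mp hi)
    rw [hg]
    simp only
    rw [← fact_inv_choose m i hi', mul_comm (X ^ i * Y ^ (m - i)) ((Nat.choose m i : Unitization ℂ N)),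
      ← nsmul_eq_mul, ← Nat.cast_smul_eq_nsmul ℂ, smul_smul]
  rw [lhs_eq, rhs_eq]
  rw [← Finset.sum_filter_add_sum_filter_not (Finset.range (ν+1) ×ˢ Finset.range (ν+1))
    (fun p => p.1 + p.2 ≤ ν) g]
  have h2 : ∑ p ∈ (Finset.range (ν+1) ×ˢ Finset.range (ν+1)).filter (fun p => ¬ p.1 + p.2 ≤ ν), g p = 0 := by
    refine Finset.sum_eq_zero fun p hp => ?_
    simp only [Finset.mem_filter, Finset.mem_product, Finset.mem_range] at hp
    rw [hg]
    simp only
    rw [hzero p.1 p.2 (by omega) (by omega) (by omega), smul_zero]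
  rw [h2, add_zero]
  refine Finset.sum_nbij' (fun p => (⟨p.1 + p.2, p.1⟩ : Σ _ : ℕ, ℕ))
    (fun q => (q.2, q.1 - q.2)) ?_ ?_ ?_ ?_ ?_
  · intro p hp
    simp only [Finset.mem_filter, Finset.mem_product, Finset.mem_range] at hp
    simp only [Finset.mem_sigma, Finset.mem_range]
    omega
  · intro q hq
    simp only [Finset.mem_sigma, Finset.mem_range] at hq
    simp only [Finset.mem_filter, Finset.mem_product, Finset.mem_range]
    omega
  · intro p hp
    show ((p.1 : ℕ), p.1 + p.2 - p.1) = p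
    have h3 : p.1 + p.2 - p.1 = p.2 := by omega
    rw [h3]
  · intro q hq
    simp only [Finset.mem_sigma, Finset.mem_range] at hq
    show (⟨q.2 + (q.1 - q.2), q.2⟩ : Σ _ : ℕ, ℕ) = q
    have h4 : q.2 + (q.1 - q.2) = q.1 := by omega
    rw [h4]
  · intro p hp
    show g p = g (p.1, p.1 + p.2 - p.1)
    have h5 : p.1 + p.2 - p.1 = p.2 := by omega
    rw [h5]

lemma Fexp_add (ν : ℕ) (hnil : npow N (ν + 1) = ⊥) (x y : N) :
    Fexp ν (x+y) = Fexp ν x + Fexp ν y + Fexp ν x * Fexp ν y := by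
  apply Unitization.inr_injective (R := ℂ)
  have h := Gmul ν hnil x y
  rw [show ((Fexp ν x + Fexp ν y + Fexp ν x * Fexp ν y : N) : Unitization ℂ N)
      = ((Fexp ν x : N) : Unitization ℂ N) + ((Fexp ν y : N) : Unitization ℂ N)
        + ((Fexp ν x : N) : Unitization ℂ N) * ((Fexp ν y : N) : Unitization ℂ N) by
    rw [Unitization.inr_add, Unitization.inr_add, Unitization.inr_mul]]
  rw [inr_Fexp, inr_Fexp, inr_Fexp, Unitization.inr_add]
  rw [← h]
  ring
end part3

section part4
variable {N : Type*} [NonUnitalCommRing N] [Module ℂ N] [SMulCommClass ℂ N N]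
    [IsScalarTower ℂ N N]

lemma upow_sub_mem_aux (j : ℕ) {w w' : N} (h : w - w' ∈ npow N (j+1)) (m : ℕ) :
    upow w (m+1) - upow w' (m+1) ∈ npow N (j+1) := by
  induction m with
  | zero => exact h
  | succ m ih =>
    have key : upow w (m+2) - upow w' (m+2)
        = w * (upow w (m+1) - upow w' (m+1)) + upow w' (m+1) * (w - w') := by
      show w * upow w (m+1) - w' * upow w' (m+1) = _
      rw [mul_sub, mul_sub, mul_comm (upow w' (m+1)) w, mul_comm (upow w' (m+1)) w']
      abel
    rw [key]
    exact add_mem (npow_succ_le _ (mul_mem_npow_s4 _ _ _ ih))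
      (npow_succ_le _ (mul_mem_npow_s4 _ _ _ h))

lemma upow_sub_mem (j : ℕ) {w w' : N} (h : w - w' ∈ npow N (j+1)) (m : ℕ) :
    upow w (m+2) - upow w' (m+2) ∈ npow N (j+2) := by
  have key : upow w (m+2) - upow w' (m+2)
      = w * (upow w (m+1) - upow w' (m+1)) + upow w' (m+1) * (w - w') := by
    show w * upow w (m+1) - w' * upow w' (m+1) = _
    rw [mul_sub, mul_sub, mul_comm (upow w' (m+1)) w, mul_comm (upow w' (m+1)) w']
    abel
  rw [key]
  exact add_mem (mul_mem_npow_s4 _ _ _ (upow_sub_mem_aux j h m)) (mul_mem_npow_s4 _ _ _ h)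

lemma Fexp_eq_add (ν : ℕ) (hν : 1 ≤ ν) (w : N) :
    Fexp ν w = w + ∑ m ∈ Finset.Icc 2 ν, ((Nat.factorial m : ℂ))⁻¹ • upow w m := by
  rw [Fexp, ← Finset.add_sum_erase _ _ (Finset.mem_Icc.mpr ⟨le_refl 1, hν⟩)]
  rw [Finset.Icc_erase_left, ← Finset.Icc_add_one_left_eq_Ioc]
  simp [upow, Nat.factorial]

lemma exists_Fexp_eq (ν : ℕ) (hnil : npow N (ν + 1) = ⊥) (c : N) :
    ∃ b : N, Fexp ν b = c := by
  rcases Nat.eq_zero_or_pos ν with hν | hν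
  · subst hν
    have hall : ∀ z : N, z = 0 := by
      intro z
      have : z ∈ npow N 1 := Submodule.mem_top
      rw [hnil] at this
      simpa using this
    exact ⟨0, by rw [hall (Fexp 0 0), hall c]⟩
  · set fs : N → N := fun w => ∑ m ∈ Finset.Icc 2 ν, ((Nat.factorial m : ℂ))⁻¹ • upow w m with hfs
    set g : N → N := fun w => c - fs w with hg
    have hstep : ∀ (k : ℕ) {w w' : N}, w - w' ∈ npow N (k+1) → g w - g w' ∈ npow N (k+2) := by
      intro k w w' h
      have : g w - g w' = ∑ m ∈ Finset.Icc 2 ν, ((Nat.factorial m : ℂ))⁻¹ • (upow w' m - upow w m) := by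
        show (c - fs w) - (c - fs w') = _
        rw [hfs]
        simp only [smul_sub]
        rw [Finset.sum_sub_distrib]
        abel
      rw [this]
      refine Submodule.sum_mem _ fun m hm => Submodule.smul_mem _ _ ?_
      have h2 : 2 ≤ m := (Finset.mem_Icc.mp hm).1
      obtain ⟨m', rfl⟩ : ∃ k', m = k' + 2 := ⟨m - 2, by omega⟩
      have h' : w' - w ∈ npow N (k+1) := by
        have := Submodule.neg_mem _ h
        simpa using this
      exact upow_sub_mem k h' m'
    have claimA : ∀ k, g (g^[k] 0) - g^[k] 0 ∈ npow N (k+1) := by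
      intro k
      induction k with
      | zero =>
        exact Submodule.mem_top
      | succ k ih =>
        rw [Function.iterate_succ_apply' g k 0]
        exact hstep k ih
    have hgb : g (g^[ν] 0) = g^[ν] 0 := by
      have := claimA ν
      rw [hnil] at this
      have h0 : g (g^[ν] 0) - g^[ν] 0 = 0 := by simpa using this
      exact eq_of_sub_eq_zero h0
    set b := g^[ν] 0 with hb
    refine ⟨b, ?_⟩
    have h6 : c - fs b = b := hgb
    have h8 : c = b + fs b := sub_eq_iff_eq_add.mp h6
    rw [Fexp_eq_add ν hν b]
    show b + fs b = c
    exact h8.symm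
end part4

section part5
variable {N : Type*} [NonUnitalCommRing N] [Module ℂ N] [SMulCommClass ℂ N N]
    [IsScalarTower ℂ N N] [FiniteDimensional ℂ N]

lemma mem_ann_of_pi_mul (ν : ℕ) (hnil : npow N (ν + 1) = ⊥)
    (π : N →ₗ[ℂ] N) (hπid : ∀ u ∈ annN N, π u = u) :
    ∀ (d k : ℕ), k + d = ν + 1 → ∀ y ∈ npow N k, (∀ x : N, π (y * x) = 0) → y ∈ annN N := by
  intro d
  induction d with
  | zero =>
    intro k hk y hy _
    have hk' : k = ν + 1 := by omega
    subst hk'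
    rw [hnil] at hy
    simp only [Submodule.mem_bot] at hy
    subst hy
    exact (annN N).zero_mem
  | succ d ih =>
    intro k hk y hy hval
    by_contra hyann
    have hex : ∃ x : N, y * x ≠ 0 := by
      by_contra hno
      push_neg at hno
      exact hyann hno
    obtain ⟨x, hx⟩ := hex
    have h1 : y * x ∈ npow N (k+1) := by
      rw [mul_comm]
      exact mul_mem_npow_s4 x y k hy
    have h2 : y * x ∈ annN N := by
      refine ih (k+1) (by omega) (y*x) h1 fun x' => ?_
      rw [mul_assoc]
      exact hval (x * x')
    have h3 : π (y * x) = y * x := hπid _ h2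
    rw [hval x] at h3
    exact hx h3.symm

lemma exists_c (ν : ℕ) (hnil : npow N (ν + 1) = ⊥)
    (hann : Module.finrank ℂ (annN N) = 1)
    (π πt : N →ₗ[ℂ] N)
    (hπr : ∀ u : N, π u ∈ annN N) (hπid : ∀ u ∈ annN N, π u = u)
    (hπtr : ∀ u : N, πt u ∈ annN N) (hπtid : ∀ u ∈ annN N, πt u = u) :
    ∃ c : N, ∀ x : N, πt x - π x = π (x * c) := by
  classical
  set π' : N →ₗ[ℂ] annN N := π.codRestrict (annN N) hπr with hπ'
  set πt' : N →ₗ[ℂ] annN N := πt.codRestrict (annN N) hπtr with hπt'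
  set bb : Module.Basis (Fin 1) ℂ (annN N) := Module.finBasisOfFinrankEq ℂ (annN N) hann with hbb
  -- every element of annN is its coordinate times the basis vector
  have hrepr : ∀ z : annN N, z = bb.coord 0 z • bb 0 := by
    intro z
    conv_lhs => rw [← bb.sum_repr z]
    rw [Fin.sum_univ_one]
    rfl
  have hcoord_inj : ∀ z w : annN N, bb.coord 0 z = bb.coord 0 w → z = w := by
    intro z w h
    rw [hrepr z, hrepr w, h]
  set φ : N →ₗ[ℂ] ℂ := (bb.coord 0).comp π' with hφ
  have hφzero : ∀ z : N, φ z = 0 → π z = 0 := by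
    intro z hz
    have : π' z = 0 := by
      have := hcoord_inj (π' z) 0 (by rw [map_zero]; exact hz)
      simpa using this
    have : ((π' z : annN N) : N) = 0 := by rw [this]; rfl
    exact this
  set B : N →ₗ[ℂ] Module.Dual ℂ N :=
    LinearMap.mk₂ ℂ (fun y x => φ (x * y))
      (fun m₁ m₂ n => by show φ (n * (m₁ + m₂)) = φ (n * m₁) + φ (n * m₂); rw [mul_add, map_add])
      (fun c m n => by show φ (n * (c • m)) = c • φ (n * m); rw [mul_smul_comm, map_smul])
      (fun m n₁ n₂ => by show φ ((n₁ + n₂) * m) = φ (n₁ * m) + φ (n₂ * m); rw [add_mul, map_add])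
      (fun c m n => by show φ ((c • n) * m) = c • φ (n * m); rw [smul_mul_assoc, map_smul]) with hB
  have hBapp : ∀ y x : N, B y x = φ (x * y) := fun y x => rfl
  have hker : LinearMap.ker B = annN N := by
    apply le_antisymm
    · intro y hy
      rw [LinearMap.mem_ker] at hy
      refine mem_ann_of_pi_mul ν hnil π hπid ν 1 (by omega) y Submodule.mem_top fun x => ?_
      apply hφzero
      have : B y x = 0 := by rw [hy]; rfl
      rw [hBapp] at this
      rw [mul_comm]
      exact this
    · intro y hy
      rw [LinearMap.mem_ker]
      ext x
      rw [hBapp]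
      have : x * y = 0 := by rw [mul_comm]; exact hy x
      rw [this, map_zero]
      rfl
  have hrange : LinearMap.range B ≤ (annN N).dualAnnihilator := by
    rintro f ⟨y, rfl⟩
    rw [Submodule.mem_dualAnnihilator]
    intro x hx
    rw [hBapp, hx y, map_zero]
  have hdim1 : Module.finrank ℂ (LinearMap.range B) + 1 = Module.finrank ℂ N := by
    have := LinearMap.finrank_range_add_finrank_ker B
    rw [hker, hann] at this
    exact this
  have hdim2 : Module.finrank ℂ ((annN N).dualAnnihilator) + 1 = Module.finrank ℂ N := by
    have e := Subspace.quotEquivAnnihilator (annN N)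
    have h1 := Submodule.finrank_quotient_add_finrank (annN N)
    rw [hann] at h1
    rw [← LinearEquiv.finrank_eq e]
    exact h1
  have hrangeeq : LinearMap.range B = (annN N).dualAnnihilator :=
    Submodule.eq_of_le_of_finrank_eq hrange (by omega)
  set ψ : Module.Dual ℂ N := (bb.coord 0).comp (πt' - π') with hψ
  have hψmem : ψ ∈ (annN N).dualAnnihilator := by
    rw [Submodule.mem_dualAnnihilator]
    intro x hx
    have hzero : πt' x - π' x = 0 := by
      have : ((πt' x - π' x : annN N) : N) = 0 := by
        show πt x - π x = 0
        rw [hπtid x hx, hπid x hx, sub_self]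
      exact Subtype.ext this
    show bb.coord 0 ((πt' - π') x) = 0
    rw [LinearMap.sub_apply, hzero, map_zero]
  obtain ⟨c, hc⟩ : ψ ∈ LinearMap.range B := by rw [hrangeeq]; exact hψmem
  refine ⟨c, fun x => ?_⟩
  have hval : φ (x * c) = bb.coord 0 (πt' x - π' x) := by
    have := congrArg (fun f : Module.Dual ℂ N => f x) hc
    beta_reduce at this
    rw [hBapp] at this
    rw [this]
    rfl
  have lhs_mem : πt x - π x ∈ annN N := sub_mem (hπtr x) (hπr x)
  have : (⟨πt x - π x, lhs_mem⟩ : annN N) = π' (x * c) := by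
    have h9 : (⟨πt x - π x, lhs_mem⟩ : annN N) = πt' x - π' x := Subtype.ext rfl
    apply hcoord_inj
    show bb.coord 0 (⟨πt x - π x, lhs_mem⟩ : annN N) = φ (x * c)
    rw [hval, h9]
  have := congrArg (fun z : annN N => (z : N)) this
  exact this
end part5


/-- For an admissible algebra `N` with two admissible projections `π`, `π̃`,
there is `a ∈ N` with `S_{π̃} = S_π + a`, where `S_π = {u : π(exp₁(2u)) = 0}` and
`exp₁(v) = Σ_{m≥1} v^m/m!`. -/
theorem stmt4 (N : Type*) [NonUnitalCommRing N] [Module ℂ N] [SMulCommClass ℂ N N]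
    [IsScalarTower ℂ N N] [FiniteDimensional ℂ N]
    (ν : ℕ) (hnil : npow N (ν + 1) = ⊥) (hann : Module.finrank ℂ (annN N) = 1)
    (π πt : N →ₗ[ℂ] N)
    (hπr : ∀ u : N, π u ∈ annN N) (hπid : ∀ u ∈ annN N, π u = u)
    (hπtr : ∀ u : N, πt u ∈ annN N) (hπtid : ∀ u ∈ annN N, πt u = u) :
    ∃ a : N,
      {u : N | πt (∑ m ∈ Finset.Icc 1 ν, ((Nat.factorial m : ℂ))⁻¹ • upow ((2 : ℂ) • u) m) = 0}
        = (fun u : N => u + a) ''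
          {u : N | π (∑ m ∈ Finset.Icc 1 ν, ((Nat.factorial m : ℂ))⁻¹ • upow ((2 : ℂ) • u) m) = 0} := by
  
  obtain ⟨c, hc⟩ := exists_c ν hnil hann π πt hπr hπid hπtr hπtid
  obtain ⟨b, hb⟩ := exists_Fexp_eq ν hnil (c - π c)
  set a : N := -((2:ℂ)⁻¹ • b) with ha
  have hπFb : π (Fexp ν b) = 0 := by
    rw [hb, map_sub, hπid (π c) (hπr c), sub_self]
  have hmul_ann : ∀ z : N, z * π c = 0 := by
    intro z
    rw [mul_comm]
    exact hπr c z
  have key : ∀ w : N, π (Fexp ν (w + b)) = πt (Fexp ν w) := by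
    intro w
    rw [Fexp_add ν hnil w b, map_add, map_add, hπFb, add_zero]
    have h1 : Fexp ν w * Fexp ν b = Fexp ν w * c - Fexp ν w * π c := by
      rw [hb, mul_sub]
    rw [h1, hmul_ann, sub_zero]
    have h2 := hc (Fexp ν w)
    rw [← h2]
    abel
  refine ⟨a, ?_⟩
  ext u
  simp only [Set.mem_setOf_eq, Set.mem_image]
  constructor
  · intro hu
    refine ⟨u - a, ?_, by abel⟩
    show π (Fexp ν ((2:ℂ) • (u - a))) = 0
    have harg : (2:ℂ) • (u - a) = (2:ℂ) • u + b := by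
      rw [ha]
      rw [smul_sub, smul_neg, smul_smul]
      norm_num
    rw [harg, key ((2:ℂ) • u)]
    exact hu
  · rintro ⟨v, hv, rfl⟩
    show πt (Fexp ν ((2:ℂ) • (v + a))) = 0
    have harg : (2:ℂ) • (v + a) + b = (2:ℂ) • v := by
      rw [ha, smul_add, smul_neg, smul_smul]
      norm_num
    rw [← key ((2:ℂ) • (v + a)), harg]
    exact hv
end

section
/- Let N be an admissible algebra with a grading N = ⊕_{j>0} N_j with N_j·N_m ⊆ N_{j+m}, and let d = max{j : N_j ≠ 0}. Then Ann(N) = N_d. -/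
open Finset

/-- If an admissible algebra `N` carries a grading `N = ⊕_{j>0} N_j` with
`N_j·N_m ⊆ N_{j+m}` and `d = max{j : N_j ≠ 0}`, then `Ann(N) = N_d`. -/
theorem stmt6 (N : Type*) [NonUnitalCommRing N] [Module ℂ N] [SMulCommClass ℂ N N]
    [IsScalarTower ℂ N N] [FiniteDimensional ℂ N]
    (ν : ℕ) (hnil : npow N (ν + 1) = ⊥) (hann : Module.finrank ℂ (annN N) = 1)
    (G : ℕ → Submodule ℂ N) (d : ℕ)
    (hG0 : G 0 = ⊥) (hGd : G d ≠ ⊥) (hGtop : ∀ j : ℕ, d < j → G j = ⊥)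
    (hGmul : ∀ (j m : ℕ) (u v : N), u ∈ G j → v ∈ G m → u * v ∈ G (j + m))
    (hdirect : DirectSum.IsInternal G) :
    annN N = G d := by
  have hle : G d ≤ annN N := by
    intro u hu v
    have hv : v ∈ ⨆ j, G j := by
      rw [hdirect.submodule_iSup_eq_top]; trivial
    induction hv using Submodule.iSup_induction' with
    | mem j w hw =>
      rcases Nat.eq_zero_or_pos j with h0 | hpos
      · subst h0; rw [hG0] at hw; simp [(Submodule.mem_bot ℂ).mp hw]
      · have := hGmul d j u w hu hw
        have hb : G (d + j) = ⊥ := hGtop _ (by omega)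
        rw [hb] at this
        exact (Submodule.mem_bot ℂ).mp this
    | zero => simp
    | add x _ y _ hx hy => rw [mul_add, hx, hy, add_zero]
  have h1 : Module.finrank ℂ (G d) = 1 := by
    have hle1 : Module.finrank ℂ (G d) ≤ 1 := hann ▸ Submodule.finrank_mono hle
    have hne : Module.finrank ℂ (G d) ≠ 0 := by
      simpa [Submodule.finrank_eq_zero] using hGd
    omega
  exact (Submodule.eq_of_le_of_finrank_eq hle (h1.trans hann.symm)).symm
end

section
/- Let N = ⊕_{j=1}^d N_j be a graded admissible algebra with Ann(N) = N_d, π the projection onto N_d with kernel K = ⊕_{j<d} N_j, and f := π ∘ exp₁ : N → N_d where exp₁(u) = Σ_{m≥1} u^m/m!. For 1 ≤ j < d and α ∈ N_j, define the vector field ξ_α(u) := (d − j − Σ_{m=1}^{d−j} m·u_m)·α on N, where u = u_1 + ⋯ + u_d with u_m ∈ N_m. Then the Lie derivative of f along ξ_α vanishes identically: (Df)(u)(ξ_α(u)) = 0 for all u ∈ N. -/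
open Finset

section Aux
set_option linter.unusedSectionVars false
variable {N : Type*} [NonUnitalNormedCommRing N] [NormedSpace ℂ N]
    [SMulCommClass ℂ N N] [IsScalarTower ℂ N N]

omit [SMulCommClass ℂ N N] [IsScalarTower ℂ N N] in
lemma aux_zero_of_mem (G : ℕ → Submodule ℂ N) (d : ℕ) (hG0 : G 0 = ⊥)
    (hGtop : ∀ j : ℕ, d < j → G j = ⊥) {i : ℕ} (hi : i ∉ Finset.Icc 1 d)
    {x : N} (hx : x ∈ G i) : x = 0 := by
  simp only [Finset.mem_Icc, not_and, not_le] at hi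
  rcases Nat.eq_zero_or_pos i with h0 | h0
  · subst h0; rw [hG0] at hx; simpa using hx
  · rw [hGtop i (hi h0)] at hx; simpa using hx

omit [SMulCommClass ℂ N N] [IsScalarTower ℂ N N] in
lemma aux_proj (G : ℕ → Submodule ℂ N) (d : ℕ) (hG0 : G 0 = ⊥)
    (hGtop : ∀ j : ℕ, d < j → G j = ⊥) (hdirect : DirectSum.IsInternal G)
    (p : ℕ → (N →ₗ[ℂ] N)) (hp : ∀ (j : ℕ) (u : N), p j u ∈ G j)
    (hpsum : ∀ u : N, ∑ j ∈ Finset.Icc 1 d, p j u = u)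
    (i k : ℕ) (x : N) (hx : x ∈ G i) : p k x = if k = i then x else 0 := by
  have ind := hdirect.submodule_iSupIndep
  by_cases hi : i ∈ Finset.Icc 1 d
  · have hsum := hpsum x
    have hadd := Finset.add_sum_erase (Finset.Icc 1 d) (fun l => p l x) hi
    simp only [hsum] at hadd
    -- step 1 : p i x = x
    have h1 : p i x = x := by
      have hm1 : x - p i x ∈ G i := sub_mem hx (hp i x)
      have hm2 : x - p i x ∈ ⨆ l, ⨆ (_ : l ≠ i), G l := by
        have hxe : x - p i x = ∑ l ∈ (Finset.Icc 1 d).erase i, p l x :=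
          sub_eq_iff_eq_add'.mpr hadd.symm
        rw [hxe]
        exact Submodule.sum_mem _ fun l hl => Submodule.mem_iSup_of_mem l
          (Submodule.mem_iSup_of_mem (Finset.ne_of_mem_erase hl) (hp l x))
      have h0 := Submodule.disjoint_def.mp (ind i) _ hm1 hm2
      exact (sub_eq_zero.mp h0).symm
    by_cases hk : k = i
    · subst hk; simp [h1]
    · rw [if_neg hk]
      by_cases hk2 : k ∈ Finset.Icc 1 d
      · have hzero : ∑ l ∈ (Finset.Icc 1 d).erase i, p l x = 0 := by
          rw [h1] at hadd
          have h2 : x + ∑ l ∈ (Finset.Icc 1 d).erase i, p l x = x + 0 := by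
            rw [add_zero]; exact hadd
          exact add_left_cancel h2
        have hk' : k ∈ (Finset.Icc 1 d).erase i := Finset.mem_erase.mpr ⟨hk, hk2⟩
        have hadd2 := Finset.add_sum_erase ((Finset.Icc 1 d).erase i) (fun l => p l x) hk'
        simp only [hzero] at hadd2
        have hm1 : p k x ∈ G k := hp k x
        have hm2 : p k x ∈ ⨆ l, ⨆ (_ : l ≠ k), G l := by
          have : p k x = -∑ l ∈ ((Finset.Icc 1 d).erase i).erase k, p l x := by
            rw [eq_neg_iff_add_eq_zero]; exact hadd2
          rw [this]
          exact neg_mem (Submodule.sum_mem _ fun l hl => Submodule.mem_iSup_of_mem l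
            (Submodule.mem_iSup_of_mem (Finset.ne_of_mem_erase hl) (hp l x)))
        exact Submodule.disjoint_def.mp (ind k) _ hm1 hm2
      · exact aux_zero_of_mem G d hG0 hGtop hk2 (hp k x)
  · have hx0 : x = 0 := aux_zero_of_mem G d hG0 hGtop hi hx
    subst hx0
    simp only [map_zero]
    split <;> simp


omit [SMulCommClass ℂ N N] [IsScalarTower ℂ N N] in
lemma aux_upow_succ (u : N) {m : ℕ} (hm : 1 ≤ m) : upow u (m + 1) = u * upow u m := by
  cases m with
  | zero => omega
  | succ k => rfl

omit [SMulCommClass ℂ N N] [IsScalarTower ℂ N N] in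
lemma aux_mul_mem_iSup (G : ℕ → Submodule ℂ N)
    (hGmul : ∀ (j m : ℕ) (u v : N), u ∈ G j → v ∈ G m → u * v ∈ G (j + m))
    (a b : ℕ) (x y : N) (hx : x ∈ ⨆ i, G (i + a)) (hy : y ∈ ⨆ i, G (i + b)) :
    x * y ∈ ⨆ i, G (i + (a + b)) := by
  induction hx using Submodule.iSup_induction' with
  | mem i z hz =>
    induction hy using Submodule.iSup_induction' with
    | mem l w hw =>
      have := hGmul _ _ _ _ hz hw
      have he : (i + a) + (l + b) = (i + l) + (a + b) := by omega
      rw [he] at this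
      exact Submodule.mem_iSup_of_mem (i + l) this
    | zero => rw [mul_zero]; exact Submodule.zero_mem _
    | add w₁ _ w₂ _ h1 h2 => rw [mul_add]; exact Submodule.add_mem _ h1 h2
  | zero => rw [zero_mul]; exact Submodule.zero_mem _
  | add z₁ _ z₂ _ h1 h2 => rw [add_mul]; exact Submodule.add_mem _ h1 h2

omit [SMulCommClass ℂ N N] [IsScalarTower ℂ N N] in
lemma aux_mem_iSup_one (G : ℕ → Submodule ℂ N) (d : ℕ)
    (p : ℕ → (N →ₗ[ℂ] N)) (hp : ∀ (j : ℕ) (u : N), p j u ∈ G j)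
    (hpsum : ∀ u : N, ∑ j ∈ Finset.Icc 1 d, p j u = u)
    (u : N) : u ∈ ⨆ i, G (i + 1) := by
  rw [← hpsum u]
  refine Submodule.sum_mem _ fun l hl => ?_
  have hl1 : 1 ≤ l := (Finset.mem_Icc.mp hl).1
  have : l = (l - 1) + 1 := by omega
  rw [this] at *
  exact Submodule.mem_iSup_of_mem (l - 1) (hp _ u)

omit [SMulCommClass ℂ N N] [IsScalarTower ℂ N N] in
lemma aux_upow_mem (G : ℕ → Submodule ℂ N) (d : ℕ)
    (hGmul : ∀ (j m : ℕ) (u v : N), u ∈ G j → v ∈ G m → u * v ∈ G (j + m))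
    (p : ℕ → (N →ₗ[ℂ] N)) (hp : ∀ (j : ℕ) (u : N), p j u ∈ G j)
    (hpsum : ∀ u : N, ∑ j ∈ Finset.Icc 1 d, p j u = u)
    (u : N) : ∀ m : ℕ, upow u (m + 1) ∈ ⨆ i, G (i + (m + 1)) := by
  intro m
  induction m with
  | zero => exact aux_mem_iSup_one G d p hp hpsum u
  | succ k ih =>
    have : upow u (k + 2) = u * upow u (k + 1) := rfl
    rw [this]
    have h2 := aux_mul_mem_iSup G hGmul 1 (k + 1) u (upow u (k + 1))
      (aux_mem_iSup_one G d p hp hpsum u) ih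
    have he : 1 + (k + 1) = k + 1 + 1 := by omega
    rwa [he] at h2

omit [SMulCommClass ℂ N N] [IsScalarTower ℂ N N] in
lemma aux_upow_top (G : ℕ → Submodule ℂ N) (d : ℕ) (hd : 1 ≤ d)
    (hGtop : ∀ j : ℕ, d < j → G j = ⊥)
    (hGmul : ∀ (j m : ℕ) (u v : N), u ∈ G j → v ∈ G m → u * v ∈ G (j + m))
    (p : ℕ → (N →ₗ[ℂ] N)) (hp : ∀ (j : ℕ) (u : N), p j u ∈ G j)
    (hpsum : ∀ u : N, ∑ j ∈ Finset.Icc 1 d, p j u = u)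
    (u v : N) : upow u d * v = 0 := by
  have h1 : upow u d ∈ ⨆ i, G (i + d) := by
    have := aux_upow_mem G d hGmul p hp hpsum u (d - 1)
    have he : d - 1 + 1 = d := by omega
    rwa [he] at this
  have h2 : upow u d * v ∈ ⨆ i, G (i + (d + 1)) :=
    aux_mul_mem_iSup G hGmul d 1 _ _ h1 (aux_mem_iSup_one G d p hp hpsum v)
  have h3 : (⨆ i, G (i + (d + 1))) = (⊥ : Submodule ℂ N) := by
    rw [iSup_eq_bot]
    intro i
    exact hGtop _ (by omega)
  rw [h3] at h2
  simpa using h2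


omit [SMulCommClass ℂ N N] [IsScalarTower ℂ N N] in
lemma aux_E_grade (G : ℕ → Submodule ℂ N) (d : ℕ) (hG0 : G 0 = ⊥)
    (hGtop : ∀ j : ℕ, d < j → G j = ⊥) (hdirect : DirectSum.IsInternal G)
    (p : ℕ → (N →ₗ[ℂ] N)) (hp : ∀ (j : ℕ) (u : N), p j u ∈ G j)
    (hpsum : ∀ u : N, ∑ j ∈ Finset.Icc 1 d, p j u = u)
    (i : ℕ) (x : N) (hx : x ∈ G i) :
    ∑ m ∈ Finset.Icc 1 d, (m : ℂ) • p m x = (i : ℂ) • x := by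
  have hproj := aux_proj G d hG0 hGtop hdirect p hp hpsum i
  by_cases hi : i ∈ Finset.Icc 1 d
  · rw [Finset.sum_eq_single i]
    · rw [hproj i x hx, if_pos rfl]
    · intro m _ hm
      rw [hproj m x hx, if_neg hm, smul_zero]
    · intro h; exact absurd hi h
  · have hx0 : x = 0 := aux_zero_of_mem G d hG0 hGtop hi hx
    subst hx0
    simp

lemma aux_E_mul (G : ℕ → Submodule ℂ N) (d : ℕ) (hG0 : G 0 = ⊥)
    (hGtop : ∀ j : ℕ, d < j → G j = ⊥)
    (hGmul : ∀ (j m : ℕ) (u v : N), u ∈ G j → v ∈ G m → u * v ∈ G (j + m))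
    (hdirect : DirectSum.IsInternal G)
    (p : ℕ → (N →ₗ[ℂ] N)) (hp : ∀ (j : ℕ) (u : N), p j u ∈ G j)
    (hpsum : ∀ u : N, ∑ j ∈ Finset.Icc 1 d, p j u = u)
    (x y : N) :
    (∑ m ∈ Finset.Icc 1 d, (m : ℂ) • p m) (x * y)
      = (∑ m ∈ Finset.Icc 1 d, (m : ℂ) • p m) x * y
        + x * (∑ m ∈ Finset.Icc 1 d, (m : ℂ) • p m) y := by
  have Eapply : ∀ z : N, (∑ m ∈ Finset.Icc 1 d, (m : ℂ) • p m) z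
      = ∑ m ∈ Finset.Icc 1 d, (m : ℂ) • p m z := by
    intro z; simp [LinearMap.sum_apply]
  have hxy : x * y = ∑ i ∈ Finset.Icc 1 d, ∑ k ∈ Finset.Icc 1 d, p i x * p k y := by
    conv_lhs => rw [← hpsum x, ← hpsum y]
    rw [Finset.sum_mul_sum]
  have hL : (∑ m ∈ Finset.Icc 1 d, (m : ℂ) • p m) (x * y)
      = ∑ i ∈ Finset.Icc 1 d, ∑ k ∈ Finset.Icc 1 d,
          (((i : ℂ)) • (p i x * p k y) + ((k : ℂ)) • (p i x * p k y)) := by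
    conv_lhs => rw [hxy]
    rw [map_sum]
    refine Finset.sum_congr rfl fun i _ => ?_
    rw [map_sum]
    refine Finset.sum_congr rfl fun k _ => ?_
    rw [Eapply, aux_E_grade G d hG0 hGtop hdirect p hp hpsum (i + k) _
      (hGmul i k _ _ (hp i x) (hp k y))]
    push_cast
    rw [add_smul]
  have hEx : (∑ m ∈ Finset.Icc 1 d, (m : ℂ) • p m) x * y
      = ∑ i ∈ Finset.Icc 1 d, ∑ k ∈ Finset.Icc 1 d, (i : ℂ) • (p i x * p k y) := by
    rw [Eapply, Finset.sum_mul]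
    refine Finset.sum_congr rfl fun i _ => ?_
    rw [smul_mul_assoc]
    conv_lhs => rw [← hpsum y]
    rw [Finset.mul_sum, Finset.smul_sum]
  have hEy : x * (∑ m ∈ Finset.Icc 1 d, (m : ℂ) • p m) y
      = ∑ i ∈ Finset.Icc 1 d, ∑ k ∈ Finset.Icc 1 d, (k : ℂ) • (p i x * p k y) := by
    rw [Eapply, Finset.mul_sum]
    have : ∀ k ∈ Finset.Icc 1 d, x * (k : ℂ) • p k y
        = ∑ i ∈ Finset.Icc 1 d, (k : ℂ) • (p i x * p k y) := by
      intro k _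
      rw [mul_smul_comm]
      conv_lhs => rw [← hpsum x]
      rw [Finset.sum_mul, Finset.smul_sum]
    rw [Finset.sum_congr rfl this, Finset.sum_comm]
  rw [hL, hEx, hEy, ← Finset.sum_add_distrib]
  refine Finset.sum_congr rfl fun i _ => ?_
  rw [← Finset.sum_add_distrib]

lemma aux_E_upow (G : ℕ → Submodule ℂ N) (d : ℕ) (hG0 : G 0 = ⊥)
    (hGtop : ∀ j : ℕ, d < j → G j = ⊥)
    (hGmul : ∀ (j m : ℕ) (u v : N), u ∈ G j → v ∈ G m → u * v ∈ G (j + m))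
    (hdirect : DirectSum.IsInternal G)
    (p : ℕ → (N →ₗ[ℂ] N)) (hp : ∀ (j : ℕ) (u : N), p j u ∈ G j)
    (hpsum : ∀ u : N, ∑ j ∈ Finset.Icc 1 d, p j u = u)
    (u : N) : ∀ m : ℕ, 1 ≤ m →
    (∑ m ∈ Finset.Icc 1 d, (m : ℂ) • p m) (upow u (m + 1))
      = ((m : ℂ) + 1) • (upow u m * (∑ m ∈ Finset.Icc 1 d, (m : ℂ) • p m) u) := by
  intro m
  induction m with
  | zero => omega
  | succ k ih =>
    intro _
    rcases Nat.eq_zero_or_pos k with hk | hk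
    · subst hk
      have h2 : upow u 2 = u * u := rfl
      rw [h2, aux_E_mul G d hG0 hGtop hGmul hdirect p hp hpsum u u]
      have : upow u 1 = u := rfl
      rw [this]
      rw [mul_comm ((∑ m ∈ Finset.Icc 1 d, (m : ℂ) • p m) u) u]
      push_cast
      module
    · have hstep : upow u (k + 1 + 1) = u * upow u (k + 1) := aux_upow_succ u (by omega)
      rw [hstep, aux_E_mul G d hG0 hGtop hGmul hdirect p hp hpsum u (upow u (k + 1)),
        ih hk, mul_smul_comm, ← mul_assoc, ← aux_upow_succ u hk, mul_comm _ (upow u (k+1))]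
      push_cast
      module


lemma aux_fderiv_mul {a b : N → N} {a' b' : N →L[ℂ] N} {x : N}
    (ha : HasFDerivAt a a' x) (hb : HasFDerivAt b b' x) :
    HasFDerivAt (fun y => a y * b y)
      ((ContinuousLinearMap.mul ℂ N (a x)).comp b'
        + ((ContinuousLinearMap.mul ℂ N).flip (b x)).comp a') x := by
  have h := ((ContinuousLinearMap.mul ℂ N).isBoundedBilinearMap.hasFDerivAt
    (a x, b x)).comp x (ha.prodMk hb)
  refine h.congr_fderiv (Eq.symm ?_)
  ext v
  simp [IsBoundedBilinearMap.deriv]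
  exact mul_comm _ _

lemma aux_hasFDeriv_upow (u : N) : ∀ m : ℕ,
    HasFDerivAt (fun y => upow y (m + 1))
      (if m = 0 then ContinuousLinearMap.id ℂ N
        else ((m : ℂ) + 1) • (ContinuousLinearMap.mul ℂ N (upow u m))) u := by
  intro m
  induction m with
  | zero =>
    rw [if_pos rfl]
    exact hasFDerivAt_id u
  | succ k ih =>
    rw [if_neg (Nat.succ_ne_zero k)]
    have hfun : (fun y : N => upow y (k + 2)) = fun y => y * upow y (k + 1) := by
      funext y; rfl
    rw [hfun]
    have h := aux_fderiv_mul (hasFDerivAt_id u) ih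
    refine h.congr_fderiv (Eq.symm ?_)
    ext v
    rcases Nat.eq_zero_or_pos k with hk | hk
    · subst hk
      simp only [if_pos rfl]
      simp only [ContinuousLinearMap.add_apply, ContinuousLinearMap.coe_comp',
        Function.comp_apply, ContinuousLinearMap.smul_apply,
        ContinuousLinearMap.mul_apply', ContinuousLinearMap.flip_apply,
        ContinuousLinearMap.coe_id', id_eq]
      have h1 : upow u 1 = u := rfl
      rw [h1, mul_comm v u]
      norm_num
      module
    · simp only [if_neg (by omega : ¬ k = 0)]
      simp only [ContinuousLinearMap.add_apply, ContinuousLinearMap.coe_comp',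
        Function.comp_apply, ContinuousLinearMap.smul_apply,
        ContinuousLinearMap.mul_apply', ContinuousLinearMap.flip_apply,
        ContinuousLinearMap.coe_id', id_eq]
      rw [mul_smul_comm, ← mul_assoc, ← aux_upow_succ u hk,
        mul_comm v (upow u (k + 1))]
      push_cast
      module

end Aux

/-- For a graded admissible algebra `N = ⊕_{j=1}^d N_j` with
`Ann(N) = N_d`, `π` the projection onto `N_d` with kernel `⊕_{j<d} N_j`, and
`f = π ∘ exp₁`, the vector fields `ξ_α(u) = (d − j − Σ_{m=1}^{d−j} m u_m)·α`
(for `α ∈ N_j`, `1 ≤ j < d`) annihilate `f`: `(Df)(u)(ξ_α(u)) = 0` for all `u`. -/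
theorem stmt7 (N : Type*) [NonUnitalNormedCommRing N] [NormedSpace ℂ N]
    [SMulCommClass ℂ N N] [IsScalarTower ℂ N N] [FiniteDimensional ℂ N]
    (ν : ℕ) (hnil : npow N (ν + 1) = ⊥) (hann : Module.finrank ℂ (annN N) = 1)
    (G : ℕ → Submodule ℂ N) (d : ℕ)
    (hG0 : G 0 = ⊥) (hGd : G d = annN N) (hGtop : ∀ j : ℕ, d < j → G j = ⊥)
    (hGmul : ∀ (j m : ℕ) (u v : N), u ∈ G j → v ∈ G m → u * v ∈ G (j + m))
    (hdirect : DirectSum.IsInternal G)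
    -- the component projections `u ↦ u_j` of the grading:
    (p : ℕ → (N →ₗ[ℂ] N)) (hp : ∀ (j : ℕ) (u : N), p j u ∈ G j)
    (hpsum : ∀ u : N, ∑ j ∈ Finset.Icc 1 d, p j u = u)
    -- `f = π ∘ exp₁` where `π = p d`:
    (f : N → N)
    (hf : ∀ u : N, f u = p d (∑ m ∈ Finset.Icc 1 d, ((Nat.factorial m : ℂ))⁻¹ • upow u m))
    (j : ℕ) (hj : 1 ≤ j) (hjd : j < d) (α : N) (hα : α ∈ G j)
    -- the vector field ξ_α:
    (ξ : N → N)
    (hξ : ∀ u : N, ξ u = ((d : ℂ) - (j : ℂ)) • α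
        - ∑ m ∈ Finset.Icc 1 (d - j), (m : ℂ) • (p m u * α)) :
    ∀ u : N, fderiv ℂ f u (ξ u) = 0 := by
  intro u
  have hd1 : 1 ≤ d := by omega
  have hjd' : j ≤ d := le_of_lt hjd
  have hproj := aux_proj G d hG0 hGtop hdirect p hp hpsum
  set c : ℂ := (d : ℂ) - (j : ℂ) with hcdef
  have hc : ((d - j : ℕ) : ℂ) = c := by rw [Nat.cast_sub hjd']
  have hdjmem : d - j ∈ Finset.Icc 1 d := by simp only [Finset.mem_Icc]; omega
  set Eop : N →ₗ[ℂ] N := ∑ m ∈ Finset.Icc 1 d, (m : ℂ) • p m with hEopdef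
  have Eapply : ∀ z : N, Eop z = ∑ m ∈ Finset.Icc 1 d, (m : ℂ) • p m z := by
    intro z; rw [hEopdef]; simp [LinearMap.sum_apply]
  set W : N := Eop u with hWdef
  set T : N := ∑ m ∈ Finset.Icc 1 d, ((Nat.factorial m : ℂ))⁻¹ • upow u m with hTdef
  -- the key reindexed sum
  have keysum : ∀ w : N,
      ∑ m ∈ Finset.Icc 2 d, ((Nat.factorial m : ℂ))⁻¹ • ((m : ℂ) • (upow u (m - 1) * w))
        = T * w := by
    intro w
    have hstep1 : ∀ m ∈ Finset.Icc 2 d,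
        ((Nat.factorial m : ℂ))⁻¹ • ((m : ℂ) • (upow u (m - 1) * w))
          = ((Nat.factorial (m - 1) : ℂ))⁻¹ • (upow u (m - 1) * w) := by
      intro m hm
      have hm2 : 2 ≤ m := (Finset.mem_Icc.mp hm).1
      rw [smul_smul]
      congr 1
      have hfact : Nat.factorial m = m * Nat.factorial (m - 1) := by
        conv_lhs => rw [show m = (m - 1) + 1 by omega]
        rw [Nat.factorial_succ]
        congr 1
        omega
      have hm0 : (m : ℂ) ≠ 0 := by
        simp only [ne_eq, Nat.cast_eq_zero]; omega
      have hf0 : ((Nat.factorial (m - 1) : ℂ)) ≠ 0 :=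
        Nat.cast_ne_zero.mpr (Nat.factorial_ne_zero _)
      rw [hfact]
      push_cast
      field_simp
    rw [Finset.sum_congr rfl hstep1]
    have hre : ∑ m ∈ Finset.Icc 2 d, ((Nat.factorial (m - 1) : ℂ))⁻¹ • (upow u (m - 1) * w)
        = ∑ r ∈ Finset.Icc 1 (d - 1), ((Nat.factorial r : ℂ))⁻¹ • (upow u r * w) := by
      refine Finset.sum_bij' (fun m _ => m - 1) (fun r _ => r + 1) ?_ ?_ ?_ ?_ ?_
      · intro a ha; simp only [Finset.mem_Icc] at ha ⊢; omega
      · intro a ha; simp only [Finset.mem_Icc] at ha ⊢; omega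
      · intro a ha; simp only [Finset.mem_Icc] at ha; show a - 1 + 1 = a; omega
      · intro a ha; simp only [Finset.mem_Icc] at ha; show a + 1 - 1 = a; omega
      · intro a ha; rfl
    rw [hre]
    have hTw : T * w = ∑ m ∈ Finset.Icc 1 d, ((Nat.factorial m : ℂ))⁻¹ • (upow u m * w) := by
      rw [hTdef, Finset.sum_mul]
      exact Finset.sum_congr rfl fun m _ => smul_mul_assoc _ _ _
    have hins : Finset.Icc 1 d = insert d (Finset.Icc 1 (d - 1)) := by
      ext m; simp only [Finset.mem_insert, Finset.mem_Icc]; omega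
    rw [hTw, hins, Finset.sum_insert (by simp only [Finset.mem_Icc]; omega)]
    rw [aux_upow_top G d hd1 hGtop hGmul p hp hpsum u w, smul_zero, zero_add]
  -- the derivative of upow
  have hup : ∀ m : ℕ, 1 ≤ m → HasFDerivAt (fun y => upow y m)
      (if m = 1 then ContinuousLinearMap.id ℂ N
        else (m : ℂ) • (ContinuousLinearMap.mul ℂ N (upow u (m - 1)))) u := by
    intro m hm
    obtain ⟨k, rfl⟩ : ∃ k, m = k + 1 := ⟨m - 1, by omega⟩
    have h := aux_hasFDeriv_upow u k
    rcases Nat.eq_zero_or_pos k with hk | hk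
    · subst hk; simpa using h
    · have h1 : ¬ (k + 1 = 1) := by omega
      have h2 : ¬ (k = 0) := by omega
      rw [if_neg h1]
      rw [if_neg h2] at h
      have h3 : ((k : ℂ) + 1) = ((k + 1 : ℕ) : ℂ) := by push_cast; ring
      rw [h3] at h
      have h4 : k + 1 - 1 = k := by omega
      rw [h4]
      exact h
  -- derivative of f
  set M : ℕ → (N →L[ℂ] N) := fun m =>
    if m = 1 then ContinuousLinearMap.id ℂ N
      else (m : ℂ) • (ContinuousLinearMap.mul ℂ N (upow u (m - 1))) with hMdef
  have hsumDeriv : HasFDerivAt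
      (fun y => ∑ m ∈ Finset.Icc 1 d, ((Nat.factorial m : ℂ))⁻¹ • upow y m)
      (∑ m ∈ Finset.Icc 1 d, ((Nat.factorial m : ℂ))⁻¹ • M m) u := by
    refine HasFDerivAt.fun_sum fun m hm => ?_
    exact (hup m (Finset.mem_Icc.mp hm).1).const_smul _
  set P : N →L[ℂ] N := LinearMap.toContinuousLinearMap (p d) with hPdef
  have hfP : f = fun y => P (∑ m ∈ Finset.Icc 1 d, ((Nat.factorial m : ℂ))⁻¹ • upow y m) := by
    funext y
    rw [hf y]
    rfl
  have hF : HasFDerivAt f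
      (P.comp (∑ m ∈ Finset.Icc 1 d, ((Nat.factorial m : ℂ))⁻¹ • M m)) u := by
    rw [hfP]
    exact P.hasFDerivAt.comp u hsumDeriv
  rw [hF.fderiv]
  -- evaluate the derivative at ξ u
  have hins1 : Finset.Icc 1 d = insert 1 (Finset.Icc 2 d) := by
    ext m; simp only [Finset.mem_insert, Finset.mem_Icc]; omega
  have h1nmem : (1 : ℕ) ∉ Finset.Icc 2 d := by simp only [Finset.mem_Icc]; omega
  have heval : (P.comp (∑ m ∈ Finset.Icc 1 d, ((Nat.factorial m : ℂ))⁻¹ • M m)) (ξ u)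
      = p d (ξ u + T * ξ u) := by
    rw [ContinuousLinearMap.comp_apply]
    have hPapp : ∀ x : N, P x = p d x := fun x => rfl
    rw [hPapp]
    congr 1
    have happ : (∑ m ∈ Finset.Icc 1 d, ((Nat.factorial m : ℂ))⁻¹ • M m) (ξ u)
        = ∑ m ∈ Finset.Icc 1 d, ((Nat.factorial m : ℂ))⁻¹ • (M m (ξ u)) := by
      simp [ContinuousLinearMap.sum_apply]
    rw [happ, hins1, Finset.sum_insert h1nmem]
    have hterm1 : ((Nat.factorial 1 : ℂ))⁻¹ • (M 1 (ξ u)) = ξ u := by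
      rw [hMdef]
      simp
    have hterm2 : ∑ m ∈ Finset.Icc 2 d, ((Nat.factorial m : ℂ))⁻¹ • (M m (ξ u))
        = T * ξ u := by
      rw [← keysum (ξ u)]
      refine Finset.sum_congr rfl fun m hm => ?_
      have hm2 : 2 ≤ m := (Finset.mem_Icc.mp hm).1
      congr 1
      rw [hMdef]
      simp only [if_neg (by omega : ¬ m = 1)]
      rw [ContinuousLinearMap.smul_apply, ContinuousLinearMap.mul_apply']
    rw [hterm1, hterm2]
  rw [heval]
  -- the algebraic part
  have hxi : ξ u = c • α - W * α := by
    rw [hξ u]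
    congr 1
    have hWα : W * α = ∑ m ∈ Finset.Icc 1 d, (m : ℂ) • (p m u * α) := by
      rw [hWdef, Eapply u, Finset.sum_mul]
      exact Finset.sum_congr rfl fun m _ => smul_mul_assoc _ _ _
    rw [hWα]
    refine Finset.sum_subset (Finset.Icc_subset_Icc_right (by omega)) ?_
    intro m hm hmn
    simp only [Finset.mem_Icc] at hm hmn
    have hzero : p m u * α = 0 := by
      refine aux_zero_of_mem G d hG0 hGtop ?_ (hGmul m j _ _ (hp m u) hα)
      simp only [Finset.mem_Icc]
      omega
    rw [hzero, smul_zero]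
  have hpdmul : ∀ x : N, p d (x * α) = p (d - j) x * α := by
    intro x
    conv_lhs => rw [← hpsum x, Finset.sum_mul]
    rw [map_sum, Finset.sum_eq_single (d - j)]
    · rw [hproj ((d - j) + j) d _ (hGmul _ j _ α (hp _ x) hα), if_pos (by omega)]
    · intro k hk hkne
      simp only [Finset.mem_Icc] at hk
      rw [hproj (k + j) d _ (hGmul k j _ α (hp k x) hα), if_neg (by omega)]
    · intro h; exact absurd hdjmem h
  have hpEz : ∀ z : N, p (d - j) (Eop z) = c • p (d - j) z := by
    intro z
    rw [Eapply z, map_sum, Finset.sum_eq_single (d - j)]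
    · rw [map_smul, hproj (d - j) (d - j) _ (hp (d - j) z), if_pos rfl, hc]
    · intro k hk hkne
      rw [map_smul, hproj k (d - j) _ (hp k z), if_neg (fun h => hkne h.symm), smul_zero]
    · intro h; exact absurd hdjmem h
  have hET : Eop T = W + T * W := by
    conv_lhs => rw [hTdef, map_sum]
    have hsm : ∀ m ∈ Finset.Icc 1 d, Eop (((Nat.factorial m : ℂ))⁻¹ • upow u m)
        = ((Nat.factorial m : ℂ))⁻¹ • Eop (upow u m) := fun m _ => map_smul _ _ _
    rw [Finset.sum_congr rfl hsm, hins1, Finset.sum_insert h1nmem]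
    have hterm1 : ((Nat.factorial 1 : ℂ))⁻¹ • Eop (upow u 1) = W := by
      have : upow u 1 = u := rfl
      rw [this, ← hWdef]
      simp
    have hterm2 : ∑ m ∈ Finset.Icc 2 d, ((Nat.factorial m : ℂ))⁻¹ • Eop (upow u m)
        = T * W := by
      rw [← keysum W]
      refine Finset.sum_congr rfl fun m hm => ?_
      have hm2 : 2 ≤ m := (Finset.mem_Icc.mp hm).1
      congr 1
      have h5 : upow u m = upow u ((m - 1) + 1) := by congr 1; omega
      rw [h5, aux_E_upow G d hG0 hGtop hGmul hdirect p hp hpsum u (m - 1) (by omega)]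
      rw [← hEopdef, ← hWdef]
      congr 1
      rw [Nat.cast_sub (by omega : 1 ≤ m)]
      ring
    rw [hterm1, hterm2]
  have hpdα : p d α = 0 := by
    rw [hproj j d α hα, if_neg (by omega)]
  set β : N := p (d - j) u with hβdef
  set γ : N := p (d - j) T with hγdef
  have h1 : p d (ξ u) = -(c • (β * α)) := by
    rw [hxi, map_sub, map_smul, hpdα, smul_zero, hpdmul W, zero_sub]
    rw [hWdef, hpEz u, smul_mul_assoc]
  have h2 : p d (T * ξ u) = c • (γ * α) - (c • γ - c • β) * α := by
    rw [hxi, mul_sub, mul_smul_comm, ← mul_assoc, map_sub, map_smul]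
    rw [hpdmul T, hpdmul (T * W)]
    have hTW : T * W = Eop T - W := by rw [hET]; abel
    rw [hTW, map_sub, hpEz T, hWdef, hpEz u]
  rw [map_add, h1, h2, sub_mul, smul_mul_assoc, smul_mul_assoc]
  abel
end

section
/- Let N be an admissible algebra, ω : N → ℂ a linear form with ω(Ann(N)) = ℂ, φ : W → ker ω a linear isomorphism, and P = ω ∘ exp₂ ∘ φ the associated nil-polynomial, where exp₂(u) = Σ_{m≥2} u^m/m!. Write P = Σ_{ℓ=2}^ν P^{[ℓ]} with P^{[ℓ]}(x) = ω(φ(x)^ℓ/ℓ!). Then the quadratic form P^{[2]} is non-degenerate on W. -/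
open Finset

lemma npow_mul_mem {N : Type*} [NonUnitalCommRing N] [Module ℂ N]
    (k : ℕ) (w v : N) (hw : w ∈ npow N k) : w * v ∈ npow N (k + 1) := by
  cases k with
  | zero => exact Submodule.mem_top
  | succ k =>
    show w * v ∈ Submodule.span ℂ {x : N | ∃ u : N, ∃ v' ∈ npow N (k+1), x = u * v'}
    exact Submodule.subset_span ⟨v, w, hw, (mul_comm w v)⟩

lemma good_chain {N : Type*} [NonUnitalCommRing N] [Module ℂ N]
    [IsScalarTower ℂ N N]
    (ν : ℕ) (hnil : npow N (ν + 1) = ⊥) :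
    ∀ j, ∀ w : N, w ∈ npow N (ν + 1 - j) → w ≠ 0 →
      ∃ z, z ∈ annN N ∧ z ≠ 0 ∧ (z = w ∨ ∃ v, z = w * v) := by
  intro j
  induction j with
  | zero =>
    intro w hw hne
    simp only [Nat.sub_zero, hnil, Submodule.mem_bot] at hw
    exact absurd hw hne
  | succ j ih =>
    intro w hw hne
    by_cases hwa : w ∈ annN N
    · exact ⟨w, hwa, hne, Or.inl rfl⟩
    · have : ∃ v : N, w * v ≠ 0 := by
        by_contra h
        push_neg at h
        exact hwa h
      obtain ⟨v, hv⟩ := this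
      have hmem : w * v ∈ npow N (ν + 1 - j) := by
        by_cases hj : j ≤ ν
        · have h1 : ν + 1 - (j + 1) + 1 = ν + 1 - j := by omega
          have := npow_mul_mem (ν + 1 - (j + 1)) w v hw
          rwa [h1] at this
        · have h0 : ν + 1 - j = 0 := by omega
          rw [h0]
          exact Submodule.mem_top
      obtain ⟨z, hzA, hz0, hz⟩ := ih (w * v) hmem hv
      refine ⟨z, hzA, hz0, Or.inr ?_⟩
      rcases hz with rfl | ⟨v', rfl⟩
      · exact ⟨v, rfl⟩
      · exact ⟨v * v', mul_assoc w v v'⟩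

/-- For a nil-polynomial `P = ω ∘ exp₂ ∘ φ` arising from an admissible
algebra `N` (ω : N → ℂ linear with ω(Ann N) = ℂ, φ : W → ker ω a linear isomorphism),
the quadratic form `P^{[2]}` is non-degenerate on `W`; i.e. the symmetric bilinear form
`(x,y) ↦ ω(φ(x)φ(y))` is non-degenerate. -/
theorem stmt9 (N : Type*) [NonUnitalCommRing N] [Module ℂ N] [SMulCommClass ℂ N N]
    [IsScalarTower ℂ N N] [FiniteDimensional ℂ N]
    (ν : ℕ) (hnil : npow N (ν + 1) = ⊥) (hann : Module.finrank ℂ (annN N) = 1)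
    (W : Type*) [AddCommGroup W] [Module ℂ W] [FiniteDimensional ℂ W]
    (ω : N →ₗ[ℂ] ℂ) (hω : ∃ a ∈ annN N, ω a ≠ 0)
    (φ : W →ₗ[ℂ] N) (hinj : Function.Injective φ)
    (hrange : LinearMap.range φ = LinearMap.ker ω) :
    ∀ x : W, (∀ y : W, ω (φ x * φ y) = 0) → x = 0 := by
  intro x hx
  by_contra hx0
  obtain ⟨a, haA, haω⟩ := hω
  set u : N := φ x with hu
  have hu0 : u ≠ 0 := fun h => hx0 (hinj (by simpa using h))
  have huker : ω u = 0 := by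
    have : u ∈ LinearMap.range φ := ⟨x, rfl⟩
    rw [hrange] at this
    exact this
  obtain ⟨z, hzA, hz0, hz⟩ := good_chain ν hnil (ν + 1) u
    (by rw [Nat.sub_self]; exact Submodule.mem_top) hu0
  have hωz : ω z ≠ 0 := by
    intro hωz0
    set z' : annN N := ⟨z, hzA⟩ with hz'
    have hz'0 : z' ≠ 0 := fun h => hz0 (by simpa [hz'] using congrArg Subtype.val h)
    have hspan : Submodule.span ℂ {z'} = ⊤ :=
      (finrank_eq_one_iff_of_nonzero z' hz'0).mp hann
    have ha' : (⟨a, haA⟩ : annN N) ∈ Submodule.span ℂ {z'} := by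
      rw [hspan]; exact Submodule.mem_top
    obtain ⟨c, hc⟩ := Submodule.mem_span_singleton.mp ha'
    have : a = c • z := by
      have := congrArg Subtype.val hc
      simpa [hz'] using this.symm
    rw [this, map_smul, hωz0, smul_zero] at haω
    exact haω rfl
  have hua : u * a = 0 := by rw [mul_comm]; exact haA u
  rcases hz with rfl | ⟨v, rfl⟩
  · exact hωz huker
  · set c : ℂ := ω v / ω a with hc
    have hv' : ω (v - c • a) = 0 := by
      simp only [map_sub, map_smul, hc, smul_eq_mul]
      field_simp
      simp
    have : v - c • a ∈ LinearMap.ker ω := hv'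
    rw [← hrange] at this
    obtain ⟨y, hy⟩ := this
    have heq : u * v = u * (v - c • a) + c • (u * a) := by
      rw [mul_sub, mul_smul_comm]; abel
    rw [heq, hua, smul_zero, add_zero, ← hy] at hωz
    exact hωz (hx y)
end

section
/- Let P be a nil-polynomial on W arising from (N, ω, φ), with symmetric multilinear forms ω_ℓ(x¹,…,x^ℓ) = ω(φ(x¹)⋯φ(x^ℓ)). Define a commutative product on W by requiring ω₂(x·y, z) = ω₃(x,y,z) for all z (well-defined since ω₂ is non-degenerate). Then φ(x)φ(y) − φ(x·y) ∈ Ann(N) for all x, y ∈ W. -/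
open Finset

lemma npow_succ_bot {N : Type*} [NonUnitalCommRing N] [Module ℂ N] (j : ℕ)
    (h : npow N (j+1) = ⊥) : npow N (j+2) = ⊥ := by
  rw [npow, h]
  refine le_antisymm (Submodule.span_le.2 ?_) bot_le
  rintro x ⟨u, v, hv, rfl⟩
  simp only [Submodule.mem_bot] at hv
  simp [hv]

lemma npow_bot {N : Type*} [NonUnitalCommRing N] [Module ℂ N] (ν : ℕ)
    (hnil : npow N (ν + 1) = ⊥) : ∀ m, ν + 1 ≤ m → npow N m = ⊥ := by
  intro m hm
  induction m, hm using Nat.le_induction with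
  | base => exact hnil
  | succ m hm ih =>
    obtain ⟨j, rfl⟩ : ∃ j, m = j + 1 := ⟨m - 1, by omega⟩
    exact npow_succ_bot j ih

lemma mul_mem_npow_succ {N : Type*} [NonUnitalCommRing N] [Module ℂ N] (m : ℕ)
    (u w : N) (hu : u ∈ npow N m) : u * w ∈ npow N (m + 1) := by
  match m with
  | 0 => exact Submodule.mem_top
  | (j+1) =>
    rw [npow]
    exact Submodule.subset_span ⟨w, u, hu, (mul_comm u w)⟩

/-- With `ω_ℓ(x¹,…,x^ℓ) = ω(φ(x¹)⋯φ(x^ℓ))` and the commutative product on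
`W` defined by `ω₂(x·y, z) = ω₃(x,y,z)` for all `z`, one has
`φ(x)φ(y) − φ(x·y) ∈ Ann(N)` for all `x, y ∈ W`. -/
theorem stmt11 (N : Type*) [NonUnitalCommRing N] [Module ℂ N] [SMulCommClass ℂ N N]
    [IsScalarTower ℂ N N] [FiniteDimensional ℂ N]
    (ν : ℕ) (hnil : npow N (ν + 1) = ⊥) (hann : Module.finrank ℂ (annN N) = 1)
    (W : Type*) [AddCommGroup W] [Module ℂ W] [FiniteDimensional ℂ W]
    (ω : N →ₗ[ℂ] ℂ) (hω : ∃ a ∈ annN N, ω a ≠ 0)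
    (φ : W →ₗ[ℂ] N) (hinj : Function.Injective φ)
    (hrange : LinearMap.range φ = LinearMap.ker ω)
    (mul : W → W → W)
    (hmul : ∀ x y z : W, ω (φ (mul x y) * φ z) = ω (φ x * φ y * φ z)) :
    ∀ x y : W, φ x * φ y - φ (mul x y) ∈ annN N := by
  obtain ⟨a, haAnn, haω⟩ := hω
  -- any element of the annihilator killed by ω is zero
  have hker : ∀ b ∈ annN N, ω b = 0 → b = 0 := by
    intro b hb hbω
    have := (finrank_eq_one_iff_of_nonzero' (⟨a, haAnn⟩ : annN N)
      (by simpa [Subtype.ext_iff] using fun h : a = 0 => haω (by rw [h]; simp))).1 hann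
    obtain ⟨c, hc⟩ := this ⟨b, hb⟩
    have hc' : c • a = b := congrArg Subtype.val hc
    have : c * ω a = 0 := by rw [← smul_eq_mul, ← map_smul, hc', hbω]
    have hc0 : c = 0 := by
      rcases mul_eq_zero.1 this with h | h
      · exact h
      · exact absurd h haω
    rw [← hc', hc0, zero_smul]
  -- key downward induction
  have key : ∀ k m : ℕ, ν + 1 ≤ m + k → ∀ u : N, u ∈ npow N m →
      (∀ z : N, ω (u * z) = 0) → u ∈ annN N := by
    intro k
    induction k with
    | zero =>
      intro m hm u hu _
      have : npow N m = ⊥ := npow_bot ν hnil m (by omega)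
      rw [this, Submodule.mem_bot] at hu
      rw [hu]; exact (annN N).zero_mem
    | succ k ih =>
      intro m hm u hu hωu
      by_contra hne
      simp only [annN, Submodule.mem_mk, AddSubmonoid.mem_mk, AddSubsemigroup.mem_mk,
        Set.mem_setOf_eq] at hne
      push_neg at hne
      obtain ⟨w, hw⟩ := hne
      have h1 : u * w ∈ npow N (m + 1) := mul_mem_npow_succ m u w hu
      have h2 : ∀ z : N, ω ((u * w) * z) = 0 := by
        intro z; rw [mul_assoc]; exact hωu (w * z)
      have h3 : u * w ∈ annN N := ih (m + 1) (by omega) (u * w) h1 h2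
      exact hw (hker (u * w) h3 (by simpa using hωu w))
  intro x y
  set d := φ x * φ y - φ (mul x y) with hd
  -- ω (d * z) = 0 for every z
  have hωd : ∀ z : N, ω (d * z) = 0 := by
    intro z
    -- decompose z = k + c • a with k ∈ ker ω
    set c := ω z / ω a with hc
    set kk := z - c • a with hkk
    have hkω : ω kk = 0 := by
      simp only [hkk, map_sub, map_smul, smul_eq_mul, hc]
      field_simp
      simp
    obtain ⟨wk, hwk⟩ : ∃ wk, φ wk = kk := by
      have : kk ∈ LinearMap.ker ω := hkω
      rw [← hrange] at this
      exact this
    have hda : d * a = 0 := by rw [mul_comm]; exact haAnn d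
    have hdk : ω (d * kk) = 0 := by
      rw [← hwk, hd, sub_mul, map_sub]
      rw [hmul x y wk, sub_self]
    have : d * z = d * kk + c • (d * a) := by
      rw [hkk, mul_sub, mul_smul_comm]; abel
    rw [this, map_add, hdk, hda, smul_zero, map_zero, add_zero]
  exact key (ν + 1) 0 (by omega) d Submodule.mem_top hωd
end

section
/- Let P be a nil-polynomial on W arising from (N, ω, φ), with symmetric ℓ-linear forms ω_ℓ(x¹,…,x^ℓ) = ω(φ(x¹)⋯φ(x^ℓ)), and let x·y be the commutative product on W defined by ω₂(x·y, z) = ω₃(x,y,z). Then for every ℓ ≥ 2 and all x¹,…,x^{ℓ+1} ∈ W: ω_{ℓ+1}(x¹,…,x^{ℓ+1}) = ω_ℓ(x¹·x², x³,…,x^{ℓ+1}). -/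
open Finset

theorem stmt12' (N : Type*) [NonUnitalCommRing N] [Module ℂ N] [SMulCommClass ℂ N N]
    [IsScalarTower ℂ N N]
    (W : Type*) [AddCommGroup W] [Module ℂ W]
    (ω : N →ₗ[ℂ] ℂ)
    (hω : ∃ a, (∀ v : N, a * v = 0) ∧ ω a ≠ 0)
    (φ : W →ₗ[ℂ] N)
    (hrange : LinearMap.range φ = LinearMap.ker ω)
    (mul : W → W → W)
    (hmul : ∀ x y z : W, ω (φ (mul x y) * φ z) = ω (φ x * φ y * φ z)) :
    ∀ (ℓ : ℕ), 2 ≤ ℓ → ∀ x : ℕ → W,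
      ω ((∏ i ∈ Finset.range (ℓ + 1),
            (Unitization.inr (φ (x i)) : Unitization ℂ N)).snd)
        = ω (((Unitization.inr (φ (mul (x 0) (x 1))) : Unitization ℂ N)
            * ∏ i ∈ Finset.Ico 2 (ℓ + 1),
                (Unitization.inr (φ (x i)) : Unitization ℂ N)).snd) := by
  intro ℓ hℓ x
  obtain ⟨a, ha, hωa⟩ := hω
  -- key lemma: for all b : N, ω (φ x0 * φ x1 * b) = ω (φ (mul x0 x1) * b)
  have key : ∀ b : N, ω (φ (mul (x 0) (x 1)) * b) = ω (φ (x 0) * φ (x 1) * b) := by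
    intro b
    have hb : b - (ω b / ω a) • a ∈ LinearMap.ker ω := by
      simp [LinearMap.mem_ker, div_mul_cancel₀, hωa]
    rw [← hrange] at hb
    obtain ⟨z, hz⟩ := hb
    have hbz : b = φ z + (ω b / ω a) • a := by rw [hz]; abel
    have haz : ∀ n : N, n * a = 0 := fun n => by rw [mul_comm]; exact ha n
    rw [hbz, mul_add, mul_add, mul_smul_comm, mul_smul_comm, haz, haz]
    simp only [smul_zero, add_zero]
    exact hmul _ _ z
  -- the N-product over Ico 2 (ℓ+1)
  set P : Unitization ℂ N := ∏ i ∈ Finset.Ico 2 (ℓ + 1),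
      (Unitization.inr (φ (x i)) : Unitization ℂ N) with hP
  have hne : (Finset.Ico 2 (ℓ + 1)).Nonempty := by
    rw [Finset.nonempty_Ico]; omega
  have hfst : P.fst = 0 := by
    have h1 := map_prod (Unitization.fstHom ℂ N)
      (fun i => (Unitization.inr (φ (x i)) : Unitization ℂ N)) (Finset.Ico 2 (ℓ + 1))
    have h2 : ∀ i, (Unitization.fstHom ℂ N) (Unitization.inr (φ (x i)) : Unitization ℂ N) = 0 :=
      fun i => Unitization.fst_inr ℂ (φ (x i))
    rw [hP, show (∏ i ∈ Finset.Ico 2 (ℓ + 1),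
        (Unitization.inr (φ (x i)) : Unitization ℂ N)).fst
      = (Unitization.fstHom ℂ N) (∏ i ∈ Finset.Ico 2 (ℓ + 1),
        (Unitization.inr (φ (x i)) : Unitization ℂ N)) from rfl, h1]
    exact Finset.prod_eq_zero hne.choose_spec (h2 _)
  have hPinr : P = Unitization.inr P.snd := by
    ext
    · simp [hfst]
    · simp
  have hsplit : ∏ i ∈ Finset.range (ℓ + 1),
      (Unitization.inr (φ (x i)) : Unitization ℂ N)
      = (Unitization.inr (φ (x 0)) : Unitization ℂ N) * Unitization.inr (φ (x 1)) * P := by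
    rw [Finset.range_eq_Ico, ← Finset.prod_Ico_consecutive _ (by omega : 0 ≤ 2) (by omega : 2 ≤ ℓ + 1)]
    congr 1
    rw [show (2:ℕ) = 0 + 2 from rfl, Finset.prod_Ico_eq_prod_range]
    simp [Finset.prod_range_succ]
  rw [hsplit, hPinr, ← Unitization.inr_mul, ← Unitization.inr_mul, ← Unitization.inr_mul,
    Unitization.snd_inr, Unitization.snd_inr]
  exact (key P.snd).symm

/-- Recursion formula: with `ω_ℓ(x¹,…,x^ℓ) = ω(φ(x¹)⋯φ(x^ℓ))` and the
product `x·y` on `W` defined by `ω₂(x·y,z) = ω₃(x,y,z)`, for every `ℓ ≥ 2` and all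
`x¹,…,x^{ℓ+1} ∈ W`: `ω_{ℓ+1}(x¹,…,x^{ℓ+1}) = ω_ℓ(x¹·x², x³,…,x^{ℓ+1})`.
(Products of elements of `N` are computed in the unital extension `Unitization ℂ N`,
whose `N`-component is extracted by `Unitization.snd`.) -/
theorem stmt12 (N : Type*) [NonUnitalCommRing N] [Module ℂ N] [SMulCommClass ℂ N N]
    [IsScalarTower ℂ N N] [FiniteDimensional ℂ N]
    (ν : ℕ) (hnil : npow N (ν + 1) = ⊥) (hann : Module.finrank ℂ (annN N) = 1)
    (W : Type*) [AddCommGroup W] [Module ℂ W] [FiniteDimensional ℂ W]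
    (ω : N →ₗ[ℂ] ℂ) (hω : ∃ a ∈ annN N, ω a ≠ 0)
    (φ : W →ₗ[ℂ] N) (hinj : Function.Injective φ)
    (hrange : LinearMap.range φ = LinearMap.ker ω)
    (mul : W → W → W)
    (hmul : ∀ x y z : W, ω (φ (mul x y) * φ z) = ω (φ x * φ y * φ z)) :
    ∀ (ℓ : ℕ), 2 ≤ ℓ → ∀ x : ℕ → W,
      ω ((∏ i ∈ Finset.range (ℓ + 1),
            (Unitization.inr (φ (x i)) : Unitization ℂ N)).snd)
        = ω (((Unitization.inr (φ (mul (x 0) (x 1))) : Unitization ℂ N)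
            * ∏ i ∈ Finset.Ico 2 (ℓ + 1),
                (Unitization.inr (φ (x i)) : Unitization ℂ N)).snd) := by
  exact stmt12' N W ω (by obtain ⟨a, ha, h⟩ := hω; exact ⟨a, ha, h⟩) φ hrange mul hmul
end

section
/- Let P(x) = Σ_{α,β} g_{αβ} x_α x_β + Σ_{α,β,γ} h_{αβγ} x_α x_β x_γ + (higher order terms) be a nil-polynomial on ℂⁿ, with g_{αβ}, h_{αβγ} symmetric in all indices. Then the graph {x₀ = P(x)} is in Blaschke normal form, i.e. Σ_{α,β} g^{αβ} h_{αβγ} = 0 for all γ, where (g^{αβ}) = (g_{αβ})^{-1}. -/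
open Finset

/-- For a nil-polynomial `P` on `ℂⁿ` with quadratic part
`Σ g_{αβ} x_α x_β` and cubic part `Σ h_{αβγ} x_α x_β x_γ` (coefficients symmetric in
all indices, so `g_{αβ} = ½ ω(φ(e_α)φ(e_β))` and `h_{αβγ} = ⅙ ω(φ(e_α)φ(e_β)φ(e_γ))`
in the standard basis), the graph `{x₀ = P(x)}` is in Blaschke normal form:
`Σ_{α,β} g^{αβ} h_{αβγ} = 0` for all `γ`, where `(g^{αβ}) = (g_{αβ})⁻¹`. -/
theorem stmt14 (N : Type*) [NonUnitalCommRing N] [Module ℂ N] [SMulCommClass ℂ N N]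
    [IsScalarTower ℂ N N] [FiniteDimensional ℂ N]
    (ν : ℕ) (hnil : npow N (ν + 1) = ⊥) (hann : Module.finrank ℂ (annN N) = 1)
    (n : ℕ)
    (ω : N →ₗ[ℂ] ℂ) (hω : ∃ a ∈ annN N, ω a ≠ 0)
    (φ : (Fin n → ℂ) →ₗ[ℂ] N) (hinj : Function.Injective φ)
    (hrange : LinearMap.range φ = LinearMap.ker ω)
    (g : Matrix (Fin n) (Fin n) ℂ)
    (hg : ∀ α β : Fin n, g α β
        = (1 / 2 : ℂ) * ω (φ (Pi.single α 1) * φ (Pi.single β 1)))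
    (h : Fin n → Fin n → Fin n → ℂ)
    (hh : ∀ α β γ : Fin n, h α β γ
        = (1 / 6 : ℂ) * ω (φ (Pi.single α 1) * φ (Pi.single β 1) * φ (Pi.single γ 1)))
    (hdet : IsUnit g.det) :
    ∀ γ : Fin n, ∑ α : Fin n, ∑ β : Fin n, g⁻¹ α β * h α β γ = 0 := by
  intro γ
  classical
  -- normalized annihilator element a with ω a = 1
  obtain ⟨a₀, ha₀, hω₀⟩ := hω
  set a : N := (ω a₀)⁻¹ • a₀ with ha_def
  have haAnn : a ∈ annN N := (annN N).smul_mem _ ha₀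
  have hωa : ω a = 1 := by
    rw [ha_def, map_smul, smul_eq_mul, inv_mul_cancel₀ hω₀]
  have hmul_a : ∀ v : N, a * v = 0 := haAnn
  -- the elements u α
  set u : Fin n → N := fun α => φ (Pi.single α 1) with hu
  have hωφ : ∀ x : Fin n → ℂ, ω (φ x) = 0 := fun x => by
    have : φ x ∈ LinearMap.ker ω := hrange ▸ LinearMap.mem_range_self φ x
    exact this
  have hua : ∀ α, u α * a = 0 := fun α => by rw [mul_comm]; exact hmul_a _
  -- multiplication operator by u γ
  set Mγ : N →ₗ[ℂ] N := LinearMap.mul ℂ N (u γ) with hMγdef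
  have hMγ_apply : ∀ v, Mγ v = u γ * v := fun v => rfl
  -- Mγ is nilpotent
  have hpow : ∀ (k : ℕ) (v : N), (Mγ ^ k) v ∈ npow N (k + 1) := by
    intro k
    induction k with
    | zero => intro v; simp [npow]
    | succ k ih =>
      intro v
      rw [pow_succ', Module.End.mul_apply]
      have : npow N (k + 1 + 1) =
          Submodule.span ℂ {x : N | ∃ w : N, ∃ v ∈ npow N (k + 1), x = w * v} := by
        cases k <;> rfl
      rw [this]
      exact Submodule.subset_span ⟨u γ, (Mγ ^ k) v, ih v, hMγ_apply _⟩
  have hMγnil : IsNilpotent Mγ := by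
    refine ⟨ν, LinearMap.ext fun v => ?_⟩
    have := hpow ν v
    rw [hnil] at this
    simpa using this
  have htrMγ : LinearMap.trace ℂ N Mγ = 0 :=
    (LinearMap.isNilpotent_trace_of_isNilpotent hMγnil).eq_zero
  -- rank-one correction has trace 0
  set r : N →ₗ[ℂ] N := (LinearMap.toSpanSingleton ℂ N a) ∘ₗ (ω ∘ₗ Mγ) with hrdef
  have hr_apply : ∀ v, r v = ω (u γ * v) • a := fun v => rfl
  have htrr : LinearMap.trace ℂ N r = 0 := by
    rw [hrdef, LinearMap.trace_comp_comm']
    have hz : (ω ∘ₗ Mγ) ∘ₗ LinearMap.toSpanSingleton ℂ N a = 0 := by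
      apply LinearMap.ext
      intro c
      simp only [LinearMap.comp_apply, LinearMap.toSpanSingleton_apply, LinearMap.zero_apply]
      rw [map_smul, map_smul, hMγ_apply, hua, map_zero, smul_zero]
    rw [hz, map_zero]
  -- the operator T
  set T : N →ₗ[ℂ] N := Mγ - r with hTdef
  have hT_apply : ∀ v, T v = u γ * v - ω (u γ * v) • a := fun v => rfl
  have hTa : T a = 0 := by
    rw [hT_apply, hua, map_zero, zero_smul, sub_zero]
  have hωT : ∀ v, ω (T v) = 0 := fun v => by
    rw [hT_apply, map_sub, map_smul, hωa, smul_eq_mul, mul_one, sub_self]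
  have htrT : LinearMap.trace ℂ N T = 0 := by
    rw [hTdef, map_sub, htrMγ, htrr, sub_zero]
  -- projection π : N → ℂⁿ
  have hkermem : ∀ v : N, ω v = 0 → v ∈ LinearMap.range φ := fun v hv => by
    rw [hrange]; exact hv
  set p : N →ₗ[ℂ] N := LinearMap.id - (LinearMap.toSpanSingleton ℂ N a) ∘ₗ ω with hpdef
  have hp_apply : ∀ v, p v = v - ω v • a := fun v => rfl
  have hωp : ∀ v, ω (p v) = 0 := fun v => by
    rw [hp_apply, map_sub, map_smul, hωa, smul_eq_mul, mul_one, sub_self]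
  set e := LinearEquiv.ofInjective φ hinj with hedef
  set π : N →ₗ[ℂ] (Fin n → ℂ) :=
    e.symm.toLinearMap ∘ₗ (p.codRestrict (LinearMap.range φ) fun v => hkermem _ (hωp v)) with hπdef
  have hφe : ∀ y : LinearMap.range φ, φ (e.symm y) = (y : N) := fun y => by
    conv_rhs => rw [← e.apply_symm_apply y]
    exact (LinearEquiv.ofInjective_apply φ (e.symm y)).symm
  have hφπ : ∀ v, φ (π v) = p v := fun v => by
    rw [hπdef]
    simp only [LinearMap.comp_apply, LinearEquiv.coe_coe]
    rw [hφe]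
    rfl
  have hπφ : ∀ x, π (φ x) = x := fun x => by
    apply hinj
    rw [hφπ, hp_apply, hωφ, zero_smul, sub_zero]
  -- the operator A on ℂⁿ
  set A : (Fin n → ℂ) →ₗ[ℂ] (Fin n → ℂ) := π ∘ₗ T ∘ₗ φ with hAdef
  have hφA : ∀ x, φ (A x) = T (φ x) := fun x => by
    rw [hAdef]
    simp only [LinearMap.comp_apply]
    rw [hφπ, hp_apply, hωT, zero_smul, sub_zero]
  have htrA : LinearMap.trace ℂ (Fin n → ℂ) A = 0 := by
    have hTfact : T = φ ∘ₗ (A ∘ₗ π) := by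
      apply LinearMap.ext
      intro v
      simp only [LinearMap.comp_apply]
      rw [hφA, hφπ, hp_apply, map_sub, map_smul, hTa, smul_zero, sub_zero]
    have h1 : LinearMap.trace ℂ N T = LinearMap.trace ℂ (Fin n → ℂ) ((A ∘ₗ π) ∘ₗ φ) := by
      rw [hTfact, LinearMap.trace_comp_comm']
    have h2 : (A ∘ₗ π) ∘ₗ φ = A := LinearMap.ext fun x => by
      simp only [LinearMap.comp_apply, hπφ]
    rw [h2, htrT] at h1
    exact h1.symm
  -- matrix of A
  set M : Matrix (Fin n) (Fin n) ℂ :=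
    LinearMap.toMatrix (Pi.basisFun ℂ (Fin n)) (Pi.basisFun ℂ (Fin n)) A with hMdef
  have htrM : Matrix.trace M = 0 := by
    rw [hMdef, ← LinearMap.trace_eq_matrix_trace ℂ (Pi.basisFun ℂ (Fin n)) A]
    exact htrA
  have hMA : ∀ δ β, M δ β = A (Pi.single β 1) δ := fun δ β => by
    rw [hMdef, LinearMap.toMatrix_apply, Pi.basisFun_repr, Pi.basisFun_apply]
  -- φ of a vector as a combination of the u's
  have hy : ∀ y : Fin n → ℂ, φ y = ∑ δ, y δ • u δ := fun y => by
    have h0 : y = ∑ δ : Fin n, y δ • (Pi.single δ 1 : Fin n → ℂ) := by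
      ext i
      simp [Pi.single_apply]
    conv_lhs => rw [h0]
    rw [map_sum]
    exact Finset.sum_congr rfl fun δ _ => by rw [map_smul]
  have hTu : ∀ β, T (u β) = ∑ δ, M δ β • u δ := fun β => by
    have h1 : T (u β) = φ (A (Pi.single β 1)) := (hφA _).symm
    rw [h1, hy]
    exact Finset.sum_congr rfl fun δ _ => by rw [hMA]
  -- key identity
  have key : ∀ α β, h α β γ = (1 / 3 : ℂ) * ∑ δ, g α δ * M δ β := by
    intro α β
    have lhs : ω (u α * T (u β)) = ∑ δ, M δ β * ω (u α * u δ) := by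
      rw [hTu β, Finset.mul_sum, map_sum]
      exact Finset.sum_congr rfl fun δ _ => by
        rw [mul_smul_comm, map_smul, smul_eq_mul]
    have rhs : ω (u α * T (u β)) = ω (u α * u β * u γ) := by
      rw [hT_apply, mul_sub, mul_smul_comm, hua, smul_zero, sub_zero]
      congr 1
      rw [mul_comm (u γ) (u β), ← mul_assoc]
    have e1 : ω (u α * u β * u γ) = 6 * h α β γ := by rw [hh]; ring
    have e2 : ∀ δ, ω (u α * u δ) = 2 * g α δ := fun δ => by rw [hg]; ring
    have e3 : 6 * h α β γ = ∑ δ, M δ β * (2 * g α δ) := by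
      rw [← e1, ← rhs, lhs]
      exact Finset.sum_congr rfl fun δ _ => by rw [e2]
    calc h α β γ = (1 / 6 : ℂ) * (6 * h α β γ) := by ring
      _ = (1 / 6 : ℂ) * ∑ δ, M δ β * (2 * g α δ) := by rw [e3]
      _ = (1 / 3 : ℂ) * ∑ δ, g α δ * M δ β := by
          rw [Finset.mul_sum, Finset.mul_sum]
          exact Finset.sum_congr rfl fun δ _ => by ring
  -- symmetry of g and g⁻¹
  have hgT : g.transpose = g := by
    ext α β
    rw [Matrix.transpose_apply, hg, hg, mul_comm (φ (Pi.single β 1))]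
  have hginv_symm : ∀ α β, g⁻¹ α β = g⁻¹ β α := fun α β => by
    conv_lhs => rw [show g⁻¹ = g.transpose⁻¹ from by rw [hgT], ← Matrix.transpose_nonsing_inv,
      Matrix.transpose_apply]
  -- final computation
  have hfin : ∑ α : Fin n, ∑ β : Fin n, g⁻¹ α β * h α β γ
      = (1 / 3 : ℂ) * Matrix.trace (g⁻¹ * (g * M)) := by
    have step1 : ∑ α : Fin n, ∑ β : Fin n, g⁻¹ α β * h α β γ
        = ∑ β : Fin n, ∑ α : Fin n, g⁻¹ β α * ((1 / 3 : ℂ) * (g * M) α β) := by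
      rw [Finset.sum_comm]
      refine Finset.sum_congr rfl fun β _ => Finset.sum_congr rfl fun α _ => ?_
      rw [key, hginv_symm, Matrix.mul_apply]
    rw [step1, Matrix.trace, Finset.mul_sum]
    refine Finset.sum_congr rfl fun β _ => ?_
    rw [Matrix.diag_apply, Matrix.mul_apply, Finset.mul_sum]
    exact Finset.sum_congr rfl fun α _ => by ring
  rw [hfin, ← Matrix.mul_assoc, Matrix.nonsing_inv_mul g hdet, Matrix.one_mul, htrM, mul_zero]
end

section
/- Let N be an admissible algebra, π an admissible projection, and suppose a ∈ N satisfies π(a) = 0 and π(au) = 0 for all u ∈ N (i.e. a is in the radical of b_π restricted to N and in ker π). Then a = 0. -/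
open Finset

/-- For an admissible algebra `N` with admissible projection `π`, if
`a ∈ N` satisfies `π(a) = 0` and `π(au) = 0` for all `u ∈ N`, then `a = 0`. -/
theorem stmt19 (N : Type*) [NonUnitalCommRing N] [Module ℂ N] [SMulCommClass ℂ N N]
    [IsScalarTower ℂ N N] [FiniteDimensional ℂ N]
    (ν : ℕ) (hnil : npow N (ν + 1) = ⊥) (hann : Module.finrank ℂ (annN N) = 1)
    (π : N →ₗ[ℂ] N) (hπr : ∀ u : N, π u ∈ annN N) (hπid : ∀ u ∈ annN N, π u = u)
    (a : N) (ha : π a = 0) (hab : ∀ u : N, π (a * u) = 0) :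
    a = 0 := by
  have mulMem : ∀ (m : ℕ) (x v : N), x ∈ npow N m → x * v ∈ npow N (m + 1) := by
    intro m x v hx
    match m with
    | 0 => exact Submodule.mem_top
    | (m'+1) =>
      show x * v ∈ npow N (m' + 2)
      apply Submodule.subset_span
      exact ⟨v, x, hx, (mul_comm x v)⟩
  have aux : ∀ (j : ℕ) (x : N), x ∈ npow N (ν + 1 - j) → π x = 0 →
      (∀ v, π (x * v) = 0) → x = 0 := by
    intro j
    induction j with
    | zero =>
      intro x hx _ _
      have : x ∈ npow N (ν + 1) := by simpa using hx
      simpa [hnil] using this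
    | succ j ih =>
      intro x hx hx0 hxv
      have hann' : ∀ v : N, x * v = 0 := by
        intro v
        apply ih (x * v) _ (hxv v) (fun w => by rw [mul_assoc]; exact hxv (v * w))
        rcases le_or_gt j ν with h | h
        · have he : ν + 1 - (j + 1) + 1 = ν + 1 - j := by omega
          rw [← he]; exact mulMem _ x v hx
        · have he : ν + 1 - j = 0 := by omega
          rw [he]; exact Submodule.mem_top
      have hxm : x ∈ annN N := hann'
      rw [← hπid x hxm, hx0]
  exact aux ν a (by rw [show ν + 1 - ν = 1 by omega]; exact Submodule.mem_top) ha hab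
end
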